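/- arXiv:2204.10074 — 5 statements merged into one kernel-verified Lean document; each statement's English description precedes it below -/
import Mathlib

section
/- For any function f : ℕ → ℂ with f(0) = 0 and any n ∈ ℕ, the sum of f(gcd(n₁,...,n_k)) over all integer k-tuples (n₁,...,n_k) ∈ ℤ^k with n₁² + ⋯ + n_k² = n equals the sum over all d with d² ∣ n of (μ * f)(d) · r_k(n/d²), where r_k(m) is the number of integer k-tuples with squares summing to m and μ * f is the Dirichlet convolution of the Möbius function with f. -/
open scoped BigOperators

open Finset

private lemma sq_sol_finite (k : ℕ) (n : ℤ) :
    Finite {v : Fin k → ℤ // ∑ i, (v i) ^ 2 = n} := by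
  have hfin : (setOf fun v : Fin k → ℤ => ∑ i, (v i) ^ 2 = n).Finite := by
    apply Set.Finite.subset (Set.Finite.pi (fun i : Fin k => Set.finite_Icc (-n) n))
    intro v hv
    replace hv : ∑ i, (v i) ^ 2 = n := hv
    intro i _
    have h1 : v i ^ 2 ≤ n := by
      rw [← hv]
      exact Finset.single_le_sum (fun j _ => sq_nonneg (v j)) (mem_univ i)
    have h2 : |v i| ≤ n := by nlinarith [abs_nonneg (v i), sq_abs (v i)]
    exact Set.mem_Icc.2 (abs_le.mp h2)
  exact hfin.to_subtype

private lemma card_aux (k n d : ℕ) (hn : 0 < n) (hd : 0 < d) (hdn : d ^ 2 ∣ n) :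
    (Nat.card {v : {v : Fin k → ℤ // ∑ i, (v i) ^ 2 = (n : ℤ)} //
        d ∣ Finset.univ.gcd fun i => (v.1 i).natAbs})
      = Nat.card {w : Fin k → ℤ // ∑ i, (w i) ^ 2 = ((n / d ^ 2 : ℕ) : ℤ)} := by
  have hd0 : ((d : ℤ) ^ 2) ≠ 0 := by positivity
  have hmul : ((n / d ^ 2 : ℕ) : ℤ) * (d : ℤ) ^ 2 = (n : ℤ) := by
    rw [← Nat.cast_pow, ← Nat.cast_mul, Nat.div_mul_cancel hdn]
  apply Nat.card_congr
  refine ⟨fun v => ⟨fun i => v.1.1 i / (d : ℤ), ?_⟩,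
    fun w => ⟨⟨fun i => (d : ℤ) * w.1 i, ?_⟩, ?_⟩, ?_, ?_⟩
  · -- forward condition
    obtain ⟨⟨v, hv⟩, hdv⟩ := v
    have hdvd : ∀ i, (d : ℤ) ∣ v i := fun i =>
      Int.natCast_dvd.mpr (dvd_trans hdv (Finset.gcd_dvd (mem_univ i)))
    apply mul_left_cancel₀ hd0
    have : (d:ℤ)^2 * ∑ i, (v i / (d:ℤ)) ^ 2 = ∑ i, (v i) ^ 2 := by
      rw [Finset.mul_sum]
      refine Finset.sum_congr rfl fun i _ => ?_
      rw [← mul_pow, Int.mul_ediv_cancel' (hdvd i)]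
    rw [this, hv, mul_comm, hmul]
  · -- backward condition
    obtain ⟨w, hw⟩ := w
    have : ∑ i, ((d:ℤ) * w i) ^ 2 = (d:ℤ)^2 * ∑ i, (w i) ^ 2 := by
      rw [Finset.mul_sum]; exact Finset.sum_congr rfl fun i _ => by ring
    rw [this, hw, mul_comm, hmul]
  · -- d divides the gcd
    refine Finset.dvd_gcd fun i _ => ?_
    rw [Int.natAbs_mul, Int.natAbs_natCast]
    exact dvd_mul_right _ _
  · -- left inverse
    rintro ⟨⟨v, hv⟩, hdv⟩
    have hdvd : ∀ i, (d : ℤ) ∣ v i := fun i =>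
      Int.natCast_dvd.mpr (dvd_trans hdv (Finset.gcd_dvd (mem_univ i)))
    ext i
    exact Int.mul_ediv_cancel' (hdvd i)
  · -- right inverse
    rintro ⟨w, hw⟩
    ext i
    exact Int.mul_ediv_cancel_left _ (by exact_mod_cast hd.ne')

theorem stmt_0 (k : ℕ) (hk : 2 ≤ k) (f : ℕ → ℂ) (hf : f 0 = 0) (n : ℕ) (hn : 0 < n) :
    ∑' v : {v : Fin k → ℤ // ∑ i, (v i) ^ 2 = (n : ℤ)},
        f (Finset.univ.gcd fun i => (v.val i).natAbs)
      = ∑ d ∈ n.divisors.filter (fun d => d ^ 2 ∣ n),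
          (∑ e ∈ d.divisors, (ArithmeticFunction.moebius e : ℂ) * f (d / e)) *
            (Nat.card {w : Fin k → ℤ // ∑ i, (w i) ^ 2 = ((n / d ^ 2 : ℕ) : ℤ)} : ℂ) := by
  classical
  haveI : Finite {v : Fin k → ℤ // ∑ i, (v i) ^ 2 = (n : ℤ)} := sq_sol_finite k (n : ℤ)
  haveI := Fintype.ofFinite {v : Fin k → ℤ // ∑ i, (v i) ^ 2 = (n : ℤ)}
  rw [tsum_fintype]
  let S := {v : Fin k → ℤ // ∑ i, (v i) ^ 2 = (n : ℤ)}
  let g : (Fin k → ℤ) → ℕ := fun v => Finset.univ.gcd fun i => (v i).natAbs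
  have hg : g = fun v => Finset.univ.gcd fun i => (v i).natAbs := rfl
  set c : ℕ → ℂ := fun d => ∑ e ∈ d.divisors, (ArithmeticFunction.moebius e : ℂ) * f (d / e)
    with hc
  set D := n.divisors.filter (fun d => d ^ 2 ∣ n) with hD
  -- Möbius inversion
  have hinv : ∀ m : ℕ, 0 < m → ∑ d ∈ m.divisors, c d = f m := by
    refine (ArithmeticFunction.sum_eq_iff_sum_mul_moebius_eq (f := c) (g := f)).mpr ?_
    intro m hm
    exact Nat.sum_divisorsAntidiagonal (fun a b => ((ArithmeticFunction.moebius a : ℤ) : ℂ) * f b)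
  -- gcd is positive on solutions
  have hgpos : ∀ v : S, 0 < g v.1 := by
    rintro ⟨v, hv⟩
    rcases Nat.eq_zero_or_pos (g v) with h | h
    · exfalso
      rw [hg] at h
      simp only [Finset.gcd_eq_zero_iff] at h
      have : ∀ i, v i = 0 := fun i => Int.natAbs_eq_zero.mp (h i (mem_univ i))
      rw [Finset.sum_congr rfl (fun i _ => by rw [this i]), Finset.sum_const] at hv
      simp at hv
      omega
    · exact h
  -- divisors of the gcd are exactly D filtered by divisibility
  have hdivset : ∀ v : S, (g v.1).divisors = D.filter (fun d => d ∣ g v.1) := by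
    rintro ⟨v, hv⟩
    ext d
    simp only [Nat.mem_divisors, hD, Finset.mem_filter]
    constructor
    · rintro ⟨hdg, -⟩
      have hdsq : d ^ 2 ∣ n := by
        have hdvd : ∀ i, (d : ℤ) ∣ v i := fun i =>
          Int.natCast_dvd.mpr (dvd_trans hdg (Finset.gcd_dvd (mem_univ i)))
        have : ((d : ℤ)) ^ 2 ∣ (n : ℤ) := by
          rw [← hv]
          exact Finset.dvd_sum fun i _ => pow_dvd_pow_of_dvd (hdvd i) 2
        exact_mod_cast this
      exact ⟨⟨⟨dvd_trans (dvd_pow_self d two_ne_zero) hdsq, hn.ne'⟩, hdsq⟩, hdg⟩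
    · rintro ⟨-, hdg⟩
      exact ⟨hdg, (hgpos ⟨v, hv⟩).ne'⟩
  show ∑ v : S, f (g v.1) = _
  calc ∑ v : S, f (g v.1)
      = ∑ v : S, ∑ d ∈ D.filter (fun d => d ∣ g v.1), c d := by
        refine Finset.sum_congr rfl fun v _ => ?_
        rw [← hdivset v, hinv _ (hgpos v)]
    _ = ∑ v : S, ∑ d ∈ D, if d ∣ g v.1 then c d else 0 := by
        refine Finset.sum_congr rfl fun v _ => ?_
        rw [Finset.sum_filter]
    _ = ∑ d ∈ D, ∑ v : S, if d ∣ g v.1 then c d else 0 := Finset.sum_comm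
    _ = ∑ d ∈ D, c d * (Nat.card {w : Fin k → ℤ // ∑ i, (w i) ^ 2 = ((n / d ^ 2 : ℕ) : ℤ)} : ℂ) := by
        refine Finset.sum_congr rfl fun d hd => ?_
        simp only [hD, Finset.mem_filter, Nat.mem_divisors] at hd
        have hdpos : 0 < d := Nat.pos_of_dvd_of_pos hd.1.1 hn
        rw [← Finset.sum_filter, Finset.sum_const, nsmul_eq_mul, mul_comm]
        congr 1
        rw [← card_aux k n d hn hdpos hd.2]
        rw [Nat.card_eq_fintype_card, Fintype.card_subtype]
end

section
/- Let k ≥ 1 be a fixed integer. There is a constant C (depending only on k) such that for all real x > 0 and all positive reals a₁,...,a_k, the sum of n₁·n₂⋯n_k over positive integer k-tuples (n₁,...,n_k) with a₁n₁² + ⋯ + a_k n_k² ≤ x differs from x^k / (2^k · k! · a₁⋯a_k) by at most C · x^{k-1/2}(√a₁ + ⋯ + √a_k)/(a₁⋯a_k). -/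
open scoped BigOperators

namespace Stmt6
open Finset


lemma pow_abs_sub (m : ℕ) {u v x : ℝ} (hu : 0 ≤ u) (hux : u ≤ x) (hv : 0 ≤ v) (hvx : v ≤ x) :
    |u ^ m - v ^ m| ≤ m * x ^ (m - 1) * |u - v| := by
  induction m with
  | zero => simp
  | succ m ih =>
    have hx : 0 ≤ x := le_trans hu hux
    have key : u ^ (m+1) - v ^ (m+1) = u ^ m * (u - v) + v * (u ^ m - v ^ m) := by ring
    rw [key]
    have h1 : |u ^ m * (u - v)| ≤ x ^ m * |u - v| := by
      rw [abs_mul]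
      apply mul_le_mul _ le_rfl (abs_nonneg _) (by positivity)
      rw [abs_of_nonneg (by positivity)]
      exact pow_le_pow_left₀ hu hux m
    have h2 : |v * (u ^ m - v ^ m)| ≤ x * (m * x ^ (m - 1) * |u - v|) := by
      rw [abs_mul, abs_of_nonneg hv]
      exact mul_le_mul hvx ih (abs_nonneg _) hx
    have h3 : x ^ m * |u - v| + x * (↑m * x ^ (m - 1) * |u - v|)
        ≤ (↑(m + 1)) * x ^ (m + 1 - 1) * |u - v| := by
      rcases Nat.eq_zero_or_pos m with hm | hm
      · subst hm; simp
      · have hmm : m - 1 + 1 = m := Nat.succ_pred_eq_of_pos hm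
        have e1 : x * (↑m * x ^ (m - 1) * |u - v|) = ↑m * x ^ (m - 1 + 1) * |u - v| := by
          rw [pow_succ]; ring
        rw [e1, hmm, Nat.add_sub_cancel]
        push_cast
        nlinarith [abs_nonneg (u - v), pow_nonneg hx m, mul_nonneg (pow_nonneg hx m) (abs_nonneg (u-v))]
    calc |u ^ m * (u - v) + v * (u ^ m - v ^ m)|
        ≤ |u ^ m * (u - v)| + |v * (u ^ m - v ^ m)| := abs_add_le _ _
      _ ≤ x ^ m * |u - v| + x * (↑m * x ^ (m - 1) * |u - v|) := add_le_add h1 h2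
      _ ≤ _ := h3

lemma lip (m : ℕ) {x a s t : ℝ} (hx : 0 < x) (ha : 0 < a)
    (hs0 : 0 ≤ s) (hsT : s ≤ Real.sqrt (x/a)) (ht0 : 0 ≤ t) (htT : t ≤ Real.sqrt (x/a)) :
    |s * (x - a * s^2)^m - t * (x - a * t^2)^m| ≤ (2*m+1) * x^m * |s - t| := by
  set T := Real.sqrt (x/a) with hT
  have hT2 : a * T^2 = x := by
    rw [hT, Real.sq_sqrt (by positivity)]
    field_simp
  have hs2 : s^2 ≤ T^2 := pow_le_pow_left₀ hs0 hsT 2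
  have ht2 : t^2 ≤ T^2 := pow_le_pow_left₀ ht0 htT 2
  have hu0 : 0 ≤ x - a * s^2 := by nlinarith
  have hux : x - a * s^2 ≤ x := by nlinarith [sq_nonneg s]
  have hv0 : 0 ≤ x - a * t^2 := by nlinarith
  have hvx : x - a * t^2 ≤ x := by nlinarith [sq_nonneg t]
  have key : s * (x - a * s^2)^m - t * (x - a * t^2)^m
      = (s - t) * (x - a*s^2)^m + t * ((x - a*s^2)^m - (x - a*t^2)^m) := by ring
  have h1 : |(s - t) * (x - a*s^2)^m| ≤ x^m * |s - t| := by
    rw [abs_mul, mul_comm]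
    apply mul_le_mul _ le_rfl (abs_nonneg _) (by positivity)
    rw [abs_of_nonneg (by positivity)]
    exact pow_le_pow_left₀ hu0 hux m
  have h2 : |t * ((x - a*s^2)^m - (x - a*t^2)^m)| ≤ 2*m * x^m * |s - t| := by
    rw [abs_mul, abs_of_nonneg ht0]
    have hd := pow_abs_sub m hu0 hux hv0 hvx
    have he : |(x - a*s^2) - (x - a*t^2)| = a * (s+t) * |s - t| := by
      rw [abs_sub_comm]
      have h : (x - a*t^2) - (x - a*s^2) = a*(s+t)*(s-t) := by ring
      rw [h, abs_mul, abs_of_nonneg (show (0:ℝ) ≤ a*(s+t) by positivity)]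
    rw [he] at hd
    calc t * |(x - a*s^2)^m - (x - a*t^2)^m|
        ≤ t * (↑m * x^(m-1) * (a * (s+t) * |s-t|)) :=
          mul_le_mul_of_nonneg_left hd ht0
      _ ≤ 2*m * x^m * |s - t| := by
          rcases Nat.eq_zero_or_pos m with hm | hm
          · subst hm; simp
          · have hmm : m - 1 + 1 = m := Nat.succ_pred_eq_of_pos hm
            have hxm1 : (0:ℝ) ≤ x^(m-1) := by positivity
            -- t * (m * x^(m-1) * (a * (s+t) * |s-t|)) ≤ 2 m x^(m-1) * (a T^2) |s-t|
            have hb : t * (↑m * x^(m-1) * (a * (s+t) * |s-t|))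
                ≤ ↑m * x^(m-1) * (a * (2*T*T)) * |s-t| := by
              have h5 : t * (a * (s+t)) ≤ a * (2*T*T) := by nlinarith [abs_nonneg (s-t)]
              nlinarith [abs_nonneg (s-t), mul_nonneg (mul_nonneg (Nat.cast_nonneg m : (0:ℝ) ≤ m) hxm1) (abs_nonneg (s-t)), sq_nonneg T]
            refine hb.trans ?_
            have hTT : a * (2*T*T) = 2*x := by nlinarith [sq_nonneg T]
            rw [hTT]
            have : (↑m) * x^(m-1) * (2*x) = 2*m*(x^(m-1)*x) := by ring
            rw [this, ← pow_succ, hmm]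
  calc |s * (x - a * s^2)^m - t * (x - a * t^2)^m|
      ≤ x^m * |s - t| + 2*m * x^m * |s - t| := by
        rw [key]; exact (abs_add_le _ _).trans (add_le_add h1 h2)
    _ = (2*m+1) * x^m * |s - t| := by ring

lemma key (m : ℕ) {x a : ℝ} (hx : 0 < x) (ha : 0 < a) :
    |(∑ n ∈ Finset.Icc 1 ⌊Real.sqrt (x/a)⌋₊, (n:ℝ) * (x - a * (n:ℝ)^2)^m)
      - x^(m+1) / (2*a*(m+1))| ≤ (2*m+2) * x^m * Real.sqrt (x/a) := by
  set T := Real.sqrt (x/a) with hT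
  set N := ⌊T⌋₊ with hN
  set f : ℝ → ℝ := fun t => t * (x - a*t^2)^m with hf
  have hT0 : 0 ≤ T := Real.sqrt_nonneg _
  have hT2 : a * T^2 = x := by
    rw [hT, Real.sq_sqrt (by positivity)]; field_simp
  have hNT : (N:ℝ) ≤ T := Nat.floor_le hT0
  have hTN1 : T < (N:ℝ) + 1 := Nat.lt_floor_add_one T
  have cont : Continuous f := by fun_prop
  have intInt : ∀ p q : ℝ, IntervalIntegrable f MeasureTheory.volume p q :=
    fun p q => cont.intervalIntegrable p q
  -- FTC
  have hderiv : ∀ t : ℝ, HasDerivAt (fun t => -((x - a*t^2)^(m+1) / (2*a*(m+1)))) (f t) t := by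
    intro t
    have h1 : HasDerivAt (fun t : ℝ => x - a*t^2) (-(2*a*t)) t := by
      have := ((hasDerivAt_pow 2 t).const_mul a).const_sub x
      refine this.congr_deriv ?_
      simp; ring
    have h2 := h1.pow (m+1)
    have h3 := (h2.div_const (2*a*(m+1))).neg
    refine h3.congr_deriv ?_
    field_simp
    push_cast [Nat.add_sub_cancel]
    ring
  have hint : ∫ t in (0:ℝ)..T, f t = x^(m+1) / (2*a*(m+1)) := by
    rw [intervalIntegral.integral_eq_sub_of_hasDerivAt (fun t _ => hderiv t) (intInt 0 T)]
    have h0 : x - a*T^2 = 0 := by rw [hT2]; ring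
    simp only [h0]
    rw [zero_pow (Nat.succ_ne_zero m)]
    norm_num
  -- sum over range N of unit integrals
  have hsum : ∑ i ∈ range N, ∫ t in (i:ℝ)..((i:ℝ)+1), f t = ∫ t in (0:ℝ)..(N:ℝ), f t := by
    have := intervalIntegral.sum_integral_adjacent_intervals
      (a := fun i : ℕ => (i:ℝ)) (n := N) (μ := MeasureTheory.volume) (fun i _ => intInt _ _)
    simpa using this
  have hreindex : ∑ n ∈ Finset.Icc 1 N, f n = ∑ i ∈ range N, f ((i:ℝ)+1) := by
    apply Finset.sum_nbij' (fun n => n - 1) (fun i => i + 1)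
    · intro n hn; simp at hn ⊢; omega
    · intro i hi; simp at hi ⊢; omega
    · intro n hn; simp at hn ⊢; omega
    · intro i hi; simp
    · intro n hn; simp at hn
      have : ((n - 1 : ℕ) : ℝ) + 1 = (n : ℝ) := by
        have := hn.1; push_cast [Nat.cast_sub this]; ring
      rw [this]
  -- per-interval bound
  have hper : ∀ i ∈ range N, |f ((i:ℝ)+1) - ∫ t in (i:ℝ)..((i:ℝ)+1), f t| ≤ (2*m+1) * x^m := by
    intro i hi
    simp only [Finset.mem_range] at hi
    have hiN : (i:ℝ) + 1 ≤ N := by exact_mod_cast Nat.succ_le_of_lt hi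
    have hc : f ((i:ℝ)+1) = ∫ t in (i:ℝ)..((i:ℝ)+1), f ((i:ℝ)+1) := by
      rw [intervalIntegral.integral_const]; simp
    rw [hc, ← intervalIntegral.integral_sub (by apply intervalIntegrable_const) (intInt _ _)]
    have hb : ∀ t ∈ Set.uIoc (i:ℝ) ((i:ℝ)+1), ‖f ((i:ℝ)+1) - f t‖ ≤ (2*m+1) * x^m := by
      intro t ht
      rw [Set.uIoc_of_le (by linarith)] at ht
      obtain ⟨ht1, ht2⟩ := ht
      have h0t : 0 ≤ t := le_trans (by positivity) ht1.le
      have htT : t ≤ T := le_trans ht2 (le_trans hiN hNT)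
      have hsT' : (i:ℝ)+1 ≤ T := le_trans hiN hNT
      have := lip m hx ha (by positivity) hsT' h0t htT
      rw [Real.norm_eq_abs]
      refine le_trans this ?_
      have habs : |(i:ℝ)+1 - t| ≤ 1 := by rw [abs_le]; constructor <;> linarith
      calc (2*↑m+1) * x^m * |(i:ℝ)+1 - t| ≤ (2*↑m+1) * x^m * 1 := by
            apply mul_le_mul_of_nonneg_left habs (by positivity)
        _ = (2*↑m+1) * x^m := by ring
    have := intervalIntegral.norm_integral_le_of_norm_le_const hb
    simp only [Real.norm_eq_abs] at this
    refine le_trans this ?_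
    simp
  -- total sum-integral bound on [0,N]
  have htot : |(∑ n ∈ Finset.Icc 1 N, f n) - ∫ t in (0:ℝ)..(N:ℝ), f t| ≤ N * ((2*m+1) * x^m) := by
    rw [hreindex, ← hsum, ← Finset.sum_sub_distrib]
    refine le_trans (Finset.abs_sum_le_sum_abs _ _) ?_
    calc ∑ i ∈ range N, |f ((i:ℝ)+1) - ∫ t in (i:ℝ)..((i:ℝ)+1), f t|
        ≤ ∑ _i ∈ range N, (2*↑m+1) * x^m := Finset.sum_le_sum hper
      _ = N * ((2*↑m+1) * x^m) := by rw [Finset.sum_const]; simp [mul_comm]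
  -- tail bound
  have htail : |∫ t in (N:ℝ)..T, f t| ≤ x^m * T := by
    have hb : ∀ t ∈ Set.uIoc (N:ℝ) T, ‖f t‖ ≤ T * x^m := by
      intro t ht
      rw [Set.uIoc_of_le hNT] at ht
      obtain ⟨ht1, ht2⟩ := ht
      have h0t : 0 ≤ t := le_trans (by positivity) ht1.le
      have hu0 : 0 ≤ x - a*t^2 := by nlinarith [pow_le_pow_left₀ h0t ht2 2]
      have hux : x - a*t^2 ≤ x := by nlinarith [sq_nonneg t]
      rw [Real.norm_eq_abs, hf]
      simp only
      rw [abs_mul, abs_of_nonneg h0t, abs_of_nonneg (by positivity)]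
      exact mul_le_mul ht2 (pow_le_pow_left₀ hu0 hux m) (by positivity) hT0
    have := intervalIntegral.norm_integral_le_of_norm_le_const hb
    rw [Real.norm_eq_abs] at this
    refine le_trans this ?_
    have : |T - (N:ℝ)| ≤ 1 := by rw [abs_le]; constructor <;> linarith
    calc T * x^m * |T - (N:ℝ)| ≤ T * x^m * 1 := by
          apply mul_le_mul_of_nonneg_left this (by positivity)
      _ = x^m * T := by ring
  -- combine
  have hsplit : (∫ t in (0:ℝ)..(N:ℝ), f t) + ∫ t in (N:ℝ)..T, f t = ∫ t in (0:ℝ)..T, f t :=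
    intervalIntegral.integral_add_adjacent_intervals (intInt _ _) (intInt _ _)
  have final : |(∑ n ∈ Finset.Icc 1 N, f n) - x^(m+1)/(2*a*(m+1))|
      ≤ N * ((2*m+1) * x^m) + x^m * T := by
    rw [← hint, ← hsplit]
    have : (∑ n ∈ Finset.Icc 1 N, f n) - ((∫ t in (0:ℝ)..(N:ℝ), f t) + ∫ t in (N:ℝ)..T, f t)
        = ((∑ n ∈ Finset.Icc 1 N, f n) - ∫ t in (0:ℝ)..(N:ℝ), f t) - ∫ t in (N:ℝ)..T, f t := by ring
    rw [this]
    exact le_trans (abs_sub _ _) (add_le_add htot htail)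
  have geq : (∑ n ∈ Finset.Icc 1 N, (n:ℝ) * (x - a*(n:ℝ)^2)^m) = ∑ n ∈ Finset.Icc 1 N, f n := rfl
  rw [geq]
  refine final.trans ?_
  have h1 : (N:ℝ) * ((2*↑m+1) * x^m) ≤ T * ((2*↑m+1) * x^m) :=
    mul_le_mul_of_nonneg_right hNT (by positivity)
  calc (N:ℝ) * ((2*↑m+1) * x^m) + x^m * T
      ≤ T * ((2*↑m+1) * x^m) + x^m * T := add_le_add h1 le_rfl
    _ = (2*↑m+2) * x^m * T := by ring



def Vset (k : ℕ) (x : ℝ) (a : Fin k → ℝ) : Set (Fin k → ℕ) :=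
  {v | (∀ i, 0 < v i) ∧ ∑ i, a i * (v i : ℝ) ^ 2 ≤ x}

lemma term_le (k : ℕ) (x : ℝ) (a : Fin k → ℝ) (ha : ∀ i, 0 < a i)
    {v : Fin k → ℕ} (hv : v ∈ Vset k x a) (i : Fin k) :
    (v i : ℝ) ≤ Real.sqrt (x / a i) := by
  obtain ⟨hpos, hsum⟩ := hv
  have hterm : a i * (v i : ℝ) ^ 2 ≤ x := by
    calc a i * (v i : ℝ) ^ 2 ≤ ∑ j, a j * (v j : ℝ) ^ 2 := by
          apply Finset.single_le_sum (f := fun j => a j * (v j : ℝ) ^ 2)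
          · intro j _; exact mul_nonneg (ha j).le (by positivity)
          · exact Finset.mem_univ i
      _ ≤ x := hsum
  exact Real.le_sqrt_of_sq_le ((le_div_iff₀' (ha i)).mpr hterm)

lemma finiteV (k : ℕ) (x : ℝ) (a : Fin k → ℝ) (ha : ∀ i, 0 < a i) :
    (Vset k x a).Finite := by
  have h : Vset k x a ⊆ Set.univ.pi (fun i => Set.Iic ⌊Real.sqrt (x / a i)⌋₊) := by
    intro v hv i _
    exact Nat.le_floor (term_le k x a ha hv i)
  exact (Set.Finite.pi (fun i => Set.finite_Iic _)).subset h

noncomputable def S (k : ℕ) (x : ℝ) (a : Fin k → ℝ) : ℝ :=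
  ∑' v : {v : Fin k → ℕ // (∀ i, 0 < v i) ∧ ∑ i, a i * (v i : ℝ) ^ 2 ≤ x},
    ∏ i, (v.val i : ℝ)


lemma S_eq_sum (k : ℕ) (x : ℝ) (a : Fin k → ℝ) (ha : ∀ i, 0 < a i) :
    S k x a = ∑ v ∈ (finiteV k x a ha).toFinset, ∏ i, (v i : ℝ) := by
  have hfin := finiteV k x a ha
  have h0 : S k x a = ∑' (w : ↥(Vset k x a)), ∏ i, ((w : Fin k → ℕ) i : ℝ) := rfl
  rw [h0, tsum_subtype (Vset k x a) (fun v => ∏ i, (v i : ℝ)),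
    tsum_eq_sum (s := hfin.toFinset)
      (fun b hb => Set.indicator_of_notMem (by simpa using hb) _)]
  exact Finset.sum_congr rfl fun v hv =>
    Set.indicator_of_mem (hfin.mem_toFinset.mp hv) _

lemma S_rec (k : ℕ) (x : ℝ) (a : Fin (k+1) → ℝ) (ha : ∀ i, 0 < a i) :
    S (k+1) x a = ∑ n ∈ Finset.Icc 1 ⌊Real.sqrt (x / a 0)⌋₊,
      (n:ℝ) * S k (x - a 0 * (n:ℝ)^2) (fun i => a i.succ) := by
  set b : Fin k → ℝ := fun i => a i.succ with hb
  have hbpos : ∀ i, 0 < b i := fun i => ha i.succ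
  set N := ⌊Real.sqrt (x / a 0)⌋₊ with hN
  rw [S_eq_sum (k+1) x a ha]
  have hrhs : ∀ n : ℕ, (n:ℝ) * S k (x - a 0 * (n:ℝ)^2) b
      = ∑ w ∈ (finiteV k (x - a 0 * (n:ℝ)^2) b hbpos).toFinset, (n:ℝ) * ∏ i, (w i : ℝ) := by
    intro n
    rw [S_eq_sum k _ b hbpos, Finset.mul_sum]
  simp only [hrhs]
  rw [← Finset.sum_sigma (Finset.Icc 1 N)
    (fun n => (finiteV k (x - a 0 * (n:ℝ)^2) b hbpos).toFinset)
    (fun p => (p.1:ℝ) * ∏ i, (p.2 i : ℝ))]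
  apply Finset.sum_nbij' (fun v => (⟨v 0, fun j => v j.succ⟩ :
      Σ n : ℕ, Fin k → ℕ)) (fun p => Fin.cons p.1 p.2)
  · -- forward membership
    intro v hv
    rw [Set.Finite.mem_toFinset] at hv
    obtain ⟨hpos, hsum⟩ := hv
    rw [Finset.mem_sigma]
    constructor
    · rw [Finset.mem_Icc]
      refine ⟨hpos 0, Nat.le_floor ?_⟩
      exact term_le (k+1) x a ha ⟨hpos, hsum⟩ 0
    · rw [Set.Finite.mem_toFinset]
      refine ⟨fun i => hpos i.succ, ?_⟩
      rw [Fin.sum_univ_succ] at hsum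
      linarith
  · -- backward membership
    intro p hp
    rw [Finset.mem_sigma, Finset.mem_Icc, Set.Finite.mem_toFinset] at hp
    obtain ⟨⟨hp1, _⟩, hpos, hsum⟩ := hp
    rw [Set.Finite.mem_toFinset]
    constructor
    · intro i
      refine Fin.cases ?_ ?_ i
      · exact hp1
      · intro j; simpa using hpos j
    · rw [Fin.sum_univ_succ]
      simp only [Fin.cons_zero, Fin.cons_succ]
      linarith
  · intro v hv
    exact Fin.cons_self_tail v
  · intro p hp
    obtain ⟨n, w⟩ := p
    simp
  · intro v hv
    exact Fin.prod_univ_succ fun i => ((v i : ℝ))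

lemma S_zero (x : ℝ) (hx : 0 ≤ x) (a : Fin 0 → ℝ) (ha : ∀ i, 0 < a i) :
    S 0 x a = 1 := by
  rw [S_eq_sum 0 x a ha]
  have h : (finiteV 0 x a ha).toFinset = {(finZeroElim : Fin 0 → ℕ)} := by
    ext v
    simp only [Set.Finite.mem_toFinset, Finset.mem_singleton]
    constructor
    · intro _; funext i; exact i.elim0
    · intro _
      refine ⟨fun i => i.elim0, ?_⟩
      simpa using hx
  rw [h]
  simp

lemma S_nonneg_zero (k : ℕ) (hk : 1 ≤ k) (a : Fin k → ℝ) (ha : ∀ i, 0 < a i) :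
    S k 0 a = 0 := by
  rw [S_eq_sum k 0 a ha]
  apply Finset.sum_eq_zero
  intro v hv
  exfalso
  rw [Set.Finite.mem_toFinset] at hv
  obtain ⟨hpos, hsum⟩ := hv
  have i0 : Fin k := ⟨0, hk⟩
  have h1 : (0:ℝ) < ∑ i, a i * (v i : ℝ)^2 := by
    apply Finset.sum_pos
    · intro i _
      have := hpos i
      have : (1:ℝ) ≤ (v i : ℝ) := by exact_mod_cast this
      have h2 : (0:ℝ) < (v i : ℝ)^2 := by positivity
      exact mul_pos (ha i) h2
    · exact ⟨i0, Finset.mem_univ i0⟩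
  linarith

set_option maxHeartbeats 2000000 in
lemma main (k : ℕ) : ∃ C : ℝ, 0 < C ∧ ∀ x : ℝ, 0 ≤ x → ∀ a : Fin k → ℝ, (∀ i, 0 < a i) →
    |S k x a - x^k / (2^k * (k.factorial : ℝ) * ∏ i, a i)|
      ≤ C * x ^ ((k:ℝ) - 1/2) * (∑ i, Real.sqrt (a i)) / ∏ i, a i := by
  induction k with
  | zero =>
    refine ⟨1, one_pos, fun x hx a ha => ?_⟩
    rw [S_zero x hx a ha]
    simp
  | succ k ih =>
    obtain ⟨C', hC', IH⟩ := ih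
    refine ⟨C' + 2*(k:ℝ) + 2, by positivity, fun x hx a ha => ?_⟩
    rcases eq_or_lt_of_le hx with hx0 | hxpos
    · -- x = 0
      rw [← hx0]
      rw [S_nonneg_zero (k+1) (Nat.succ_le_succ (Nat.zero_le k)) a ha]
      rw [Real.zero_rpow (by push_cast; norm_num; intro h; nlinarith [(Nat.cast_nonneg k : (0:ℝ) ≤ k)] : ((k+1:ℕ):ℝ) - 1/2 ≠ 0)]
      simp
    · -- x > 0
      set a0 := a 0 with ha0def
      have ha0 : 0 < a0 := ha 0
      set b : Fin k → ℝ := fun i => a i.succ with hbdef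
      have hbpos : ∀ i, 0 < b i := fun i => ha i.succ
      set A' : ℝ := ∏ i, b i with hA'def
      have hA' : 0 < A' := Finset.prod_pos (fun i _ => hbpos i)
      set B' : ℝ := ∑ i, Real.sqrt (b i) with hB'def
      have hB' : 0 ≤ B' := Finset.sum_nonneg (fun i _ => Real.sqrt_nonneg _)
      have hAeq : (∏ i, a i) = a0 * A' := Fin.prod_univ_succ a
      have hBeq : (∑ i, Real.sqrt (a i)) = Real.sqrt a0 + B' := Fin.sum_univ_succ _
      set T := Real.sqrt (x / a0) with hTdef
      set N := ⌊T⌋₊ with hNdef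
      have hT0 : 0 ≤ T := Real.sqrt_nonneg _
      have hT2 : a0 * T^2 = x := by
        rw [hTdef, Real.sq_sqrt (div_nonneg hx ha0.le)]; field_simp
      set sx := Real.sqrt x with hsxdef
      have hsx : 0 < sx := Real.sqrt_pos.mpr hxpos
      have hsx2 : sx^2 = x := Real.sq_sqrt hx
      set sa := Real.sqrt a0 with hsadef
      have hsa : 0 < sa := Real.sqrt_pos.mpr ha0
      have hsa2 : sa^2 = a0 := Real.sq_sqrt ha0.le
      have hTsx : T = sx / sa := by
        rw [hTdef, hsxdef, hsadef, Real.sqrt_div hx a0]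
      set D' : ℝ := 1 / (2^k * (k.factorial : ℝ) * A') with hD'def
      have hD' : 0 < D' := by
        rw [hD'def]
        exact one_div_pos.mpr (mul_pos (mul_pos (pow_pos two_pos k)
          (Nat.cast_pos.mpr k.factorial_pos)) hA')
      set R := x ^ (((k:ℝ) + 1) - 1/2) with hRdef
      have hexp : ((k+1:ℕ):ℝ) - 1/2 = ((k:ℝ) + 1) - 1/2 := by push_cast; ring
      have hR2 : R = x^k * sx := by
        rw [hRdef, hsxdef, Real.sqrt_eq_rpow,
          show ((k:ℝ) + 1) - 1/2 = (k:ℝ) + 1/2 by ring,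
          Real.rpow_add hxpos, Real.rpow_natCast]
      have hR1 : x ^ ((k:ℝ) - 1/2) * x = R := by
        rw [hRdef, show ((k:ℝ) + 1) - 1/2 = ((k:ℝ) - 1/2) + 1 by ring,
          Real.rpow_add hxpos, Real.rpow_one]
      have hNleT0 : (N:ℝ) ≤ T := Nat.floor_le hT0
      clear_value a0 b A' B' T N sx sa D' R
      -- facts about n in range
      have hfacts : ∀ n ∈ Finset.Icc 1 N, (1:ℝ) ≤ (n:ℝ) ∧ (n:ℝ) ≤ T
          ∧ 0 ≤ x - a0 * (n:ℝ)^2 ∧ x - a0 * (n:ℝ)^2 ≤ x := by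
        intro n hn
        rw [Finset.mem_Icc] at hn
        have h1 : (1:ℝ) ≤ (n:ℝ) := by exact_mod_cast hn.1
        have h2 : (n:ℝ) ≤ (N:ℝ) := by exact_mod_cast hn.2
        have h3 : (n:ℝ) ≤ T := h2.trans hNleT0
        have h4 : (n:ℝ)^2 ≤ T^2 := pow_le_pow_left₀ (by linarith) h3 2
        refine ⟨h1, h3, by nlinarith, by nlinarith⟩
      -- IH-based per-term bound
      set Q := C' * x ^ ((k:ℝ) - 1/2) * B' / A' with hQdef
      clear_value Q
      have hQ0 : 0 ≤ Q := by
        rw [hQdef]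
        exact div_nonneg (mul_nonneg (mul_nonneg hC'.le (Real.rpow_nonneg hx _)) hB') hA'.le
      have hper : ∀ n ∈ Finset.Icc 1 N,
          |S k (x - a0 * (n:ℝ)^2) b - (x - a0 * (n:ℝ)^2)^k * D'| ≤ Q := by
        intro n hn
        obtain ⟨h1, h3, hxn0, hxnx⟩ := hfacts n hn
        have hIH := IH (x - a0 * (n:ℝ)^2) hxn0 b hbpos
        rw [← hA'def, ← hB'def] at hIH
        have heq : (x - a0 * (n:ℝ)^2)^k * D'
            = (x - a0 * (n:ℝ)^2)^k / (2^k * (k.factorial : ℝ) * A') := by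
          rw [hD'def]; ring
        rw [heq]
        refine hIH.trans ?_
        rw [hQdef]
        rcases Nat.eq_zero_or_pos k with hk0 | hk0
        · subst hk0
          simp only [hB'def]
          simp
        · have hexp0 : (0:ℝ) ≤ (k:ℝ) - 1/2 := by
            have : (1:ℝ) ≤ (k:ℝ) := by exact_mod_cast hk0
            linarith
          have h6 := Real.rpow_le_rpow hxn0 hxnx hexp0
          exact (div_le_div_iff_of_pos_right hA').mpr
            (mul_le_mul_of_nonneg_right (mul_le_mul_of_nonneg_left h6 hC'.le) hB')
      -- sum of n bound
      have hNleT : (N:ℝ) ≤ T := hNleT0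
      have hsumn : (∑ n ∈ Finset.Icc 1 N, (n:ℝ)) ≤ x / a0 := by
        have h1 : (∑ n ∈ Finset.Icc 1 N, (n:ℝ)) ≤ ∑ _n ∈ Finset.Icc 1 N, T := by
          apply Finset.sum_le_sum
          intro n hn
          rw [Finset.mem_Icc] at hn
          have : (n:ℝ) ≤ (N:ℝ) := by exact_mod_cast hn.2
          exact this.trans hNleT
        rw [Finset.sum_const, Nat.card_Icc] at h1
        simp only [Nat.add_sub_cancel, nsmul_eq_mul] at h1
        have h2 : (N:ℝ) * T ≤ T * T :=
          mul_le_mul_of_nonneg_right hNleT hT0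
        have h3 : T * T = x / a0 := by
          rw [hTdef]; exact Real.mul_self_sqrt (div_nonneg hx ha0.le)
        linarith
      -- split identity
      have hmain : x^(k+1) / (2^(k+1) * (((k+1).factorial : ℕ) : ℝ) * ∏ i, a i)
          = D' * (x^(k+1) / (2 * a0 * ((k:ℝ)+1))) := by
        rw [hAeq, hD'def, Nat.factorial_succ]
        have hkc : (0:ℝ) ≤ (k:ℝ) := Nat.cast_nonneg k
        have hk1 : ((k:ℝ) + 1) ≠ 0 := by linarith
        have hkf : ((k.factorial : ℕ) : ℝ) ≠ 0 := Nat.cast_ne_zero.mpr k.factorial_pos.ne'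
        push_cast
        field_simp
        ring
      have hsplit : S (k+1) x a - x^(k+1) / (2^(k+1) * (((k+1).factorial : ℕ) : ℝ) * ∏ i, a i)
          = (∑ n ∈ Finset.Icc 1 N, (n:ℝ) * (S k (x - a0*(n:ℝ)^2) b - (x - a0*(n:ℝ)^2)^k * D'))
            + D' * ((∑ n ∈ Finset.Icc 1 N, (n:ℝ) * (x - a0*(n:ℝ)^2)^k)
              - x^(k+1) / (2 * a0 * ((k:ℝ)+1))) := by
        rw [S_rec k x a ha, hmain]
        rw [← ha0def, ← hbdef, ← hTdef, ← hNdef]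
        have expand : ∀ n : ℕ, (n:ℝ) * (S k (x - a0*(n:ℝ)^2) b - (x - a0*(n:ℝ)^2)^k * D')
            = (n:ℝ) * S k (x - a0*(n:ℝ)^2) b - D' * ((n:ℝ) * (x - a0*(n:ℝ)^2)^k) := by
          intro n; ring
        simp only [expand]
        rw [Finset.sum_sub_distrib, mul_sub, Finset.mul_sum]
        ring
      -- E bound
      have hE : |∑ n ∈ Finset.Icc 1 N, (n:ℝ) * (S k (x - a0*(n:ℝ)^2) b - (x - a0*(n:ℝ)^2)^k * D')|
          ≤ (x/a0) * Q := by
        refine (Finset.abs_sum_le_sum_abs _ _).trans ?_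
        have hterm : ∀ n ∈ Finset.Icc 1 N,
            |(n:ℝ) * (S k (x - a0*(n:ℝ)^2) b - (x - a0*(n:ℝ)^2)^k * D')| ≤ (n:ℝ) * Q := by
          intro n hn
          rw [abs_mul, abs_of_nonneg (Nat.cast_nonneg n)]
          exact mul_le_mul_of_nonneg_left (hper n hn) (Nat.cast_nonneg n)
        refine (Finset.sum_le_sum hterm).trans ?_
        rw [← Finset.sum_mul]
        exact mul_le_mul_of_nonneg_right hsumn hQ0
      -- K bound
      have hK := key k hxpos ha0
      rw [← hTdef, ← hNdef] at hK
      -- algebra steps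
      have hR0 : 0 ≤ R := by rw [hRdef]; exact Real.rpow_nonneg hx _
      have hxk0 : (0:ℝ) ≤ x^k := pow_nonneg hx k
      have hrpowR : x ^ ((k:ℝ) - 1/2) = R / x := by
        rw [← hR1]; field_simp
      have step1 : (x/a0) * Q = C' * R * B' / (a0 * A') := by
        rw [hQdef, hrpowR]
        field_simp
      have hD'le : D' ≤ 1/A' := by
        rw [hD'def]
        apply one_div_le_one_div_of_le hA'
        have hc : (1:ℝ) ≤ 2^k * ((k.factorial : ℕ) : ℝ) := by
          have h1 : (1:ℝ) ≤ 2^k := one_le_pow₀ one_le_two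
          have h2 : (1:ℝ) ≤ ((k.factorial : ℕ) : ℝ) := by
            exact_mod_cast k.factorial_pos
          calc (1:ℝ) = 1 * 1 := by ring
            _ ≤ 2^k * ((k.factorial : ℕ) : ℝ) :=
              mul_le_mul h1 h2 zero_le_one (by linarith)
        exact le_mul_of_one_le_left hA'.le hc
      have step2 : D' * ((2*(k:ℝ)+2) * x^k * T) ≤ ((2*(k:ℝ)+2) * R * sa) / (a0 * A') := by
        have hkc : (0:ℝ) ≤ (k:ℝ) := Nat.cast_nonneg k
        have hnn : (0:ℝ) ≤ (2*(k:ℝ)+2) * x^k * T :=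
          mul_nonneg (mul_nonneg (by linarith) hxk0) hT0
        refine (mul_le_mul_of_nonneg_right hD'le hnn).trans (le_of_eq ?_)
        rw [hTsx, hR2]
        rw [← hsa2]
        field_simp
      have step3 : C' * R * B' / (a0 * A') + ((2*(k:ℝ)+2) * R * sa) / (a0 * A')
          ≤ (C' + 2*(k:ℝ) + 2) * R * (sa + B') / (a0 * A') := by
        rw [← add_div]
        refine (div_le_div_iff_of_pos_right (mul_pos ha0 hA')).mpr ?_
        have e1 : (C' + 2*(k:ℝ) + 2) * R * (sa + B')
            = C' * R * B' + (2*(k:ℝ)+2) * R * sa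
              + (C' * R * sa + (2*(k:ℝ)+2) * R * B') := by ring
        rw [e1]
        have hkc : (0:ℝ) ≤ (k:ℝ) := Nat.cast_nonneg k
        have t1 : 0 ≤ C' * R * sa := mul_nonneg (mul_nonneg hC'.le hR0) hsa.le
        have t2 : 0 ≤ (2*(k:ℝ)+2) * R * B' :=
          mul_nonneg (mul_nonneg (by linarith) hR0) hB'
        linarith
      -- final assembly
      rw [hsplit, hexp, ← hRdef, hBeq, hAeq]
      refine (abs_add_le _ _).trans ?_
      rw [abs_mul, abs_of_nonneg hD'.le]
      exact le_trans (add_le_add hE (mul_le_mul_of_nonneg_left hK hD'.le))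
        (le_trans (add_le_add (le_of_eq step1) step2) step3)

end Stmt6

theorem stmt_6 (k : ℕ) (hk : 1 ≤ k) :
    ∃ C : ℝ, 0 < C ∧ ∀ x : ℝ, 0 < x → ∀ a : Fin k → ℝ, (∀ i, 0 < a i) →
      |(∑' v : {v : Fin k → ℕ // (∀ i, 0 < v i) ∧ ∑ i, a i * (v i : ℝ) ^ 2 ≤ x},
            ∏ i, (v.val i : ℝ))
          - x ^ k / (2 ^ k * (k.factorial : ℝ) * ∏ i, a i)|
        ≤ C * x ^ ((k : ℝ) - 1 / 2) * (∑ i, Real.sqrt (a i)) / ∏ i, a i := by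
  obtain ⟨C, hC, h⟩ := Stmt6.main k
  exact ⟨C, hC, fun x hx a ha => h x hx.le a ha⟩
end

section
/- For k ≥ 2 and complex z₁,...,z_k with Re z_j > 1 for each j, Σ_{n₁,...,n_k ≥ 1} τ(gcd(n₁,...,n_k)) / (n₁^{z₁} ⋯ n_k^{z_k}) = ζ(z₁)⋯ζ(z_k)·ζ(z₁ + ⋯ + z_k), where τ is the number-of-divisors function. -/
set_option maxHeartbeats 1000000

open scoped BigOperators
open Complex

lemma aux_cpow_sum {ι : Type*} (s : Finset ι) {x : ℂ} (hx : x ≠ 0) (f : ι → ℂ) :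
    x ^ (∑ i ∈ s, f i) = ∏ i ∈ s, x ^ f i := by
  induction s using Finset.cons_induction with
  | empty => simp
  | cons a s ha ih =>
      rw [Finset.sum_cons, Finset.prod_cons, Complex.cpow_add _ _ hx, ih]

lemma aux_norm_pnat_cpow (m : ℕ+) (w : ℂ) :
    ‖((m : ℕ) : ℂ) ^ w‖ = ((m : ℕ) : ℝ) ^ w.re :=
  Complex.norm_natCast_cpow_of_pos m.pos w

lemma aux_summable_norm_pnat_cpow {s : ℂ} (hs : 1 < s.re) :
    Summable fun m : ℕ+ => ‖((m : ℕ) : ℂ) ^ (-s)‖ := by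
  have h : Summable fun n : ℕ => ((n : ℝ) ^ (-s.re)) :=
    Real.summable_nat_rpow.mpr (by linarith)
  have h2 : Summable fun m : ℕ+ => (((m : ℕ) : ℝ) ^ (-s.re)) :=
    h.comp_injective (fun a b hab => PNat.coe_injective hab)
  refine h2.congr fun m => ?_
  rw [aux_norm_pnat_cpow, Complex.neg_re]

lemma aux_hasSum_pnat_cpow {s : ℂ} (hs : 1 < s.re) :
    HasSum (fun m : ℕ+ => ((m : ℕ) : ℂ) ^ (-s)) (riemannZeta s) := by
  have hne : s ≠ 0 := by
    intro h; rw [h] at hs; simp at hs; linarith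
  have hsum : Summable fun n : ℕ => 1 / (n : ℂ) ^ s :=
    Complex.summable_one_div_nat_cpow.mpr hs
  have heq : ∀ n : ℕ, (1 : ℂ) / (n : ℂ) ^ s = (n : ℂ) ^ (-s) := fun n => by
    rw [Complex.cpow_neg, one_div]
  have hsum' : Summable fun n : ℕ => (n : ℂ) ^ (-s) := hsum.congr heq
  have hts : ∑' n : ℕ, (n : ℂ) ^ (-s) = riemannZeta s := by
    rw [zeta_eq_tsum_one_div_nat_cpow hs]
    exact tsum_congr fun n => (heq n).symm
  have hinj : Function.Injective (fun m : ℕ+ => (m : ℕ)) := PNat.coe_injective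
  have hrange : ∀ x ∉ Set.range (fun m : ℕ+ => (m : ℕ)), (x : ℂ) ^ (-s) = 0 := by
    intro x hx
    have : x = 0 := by
      by_contra h
      exact hx ⟨⟨x, Nat.pos_of_ne_zero h⟩, rfl⟩
    rw [this]
    simpa using Complex.zero_cpow (neg_ne_zero.mpr hne)
  have := (hinj.hasSum_iff hrange).mpr (hts ▸ hsum'.hasSum)
  exact this

lemma aux_pi_hasSum (k : ℕ) : ∀ (f : Fin k → ℕ+ → ℂ),
    (∀ i, Summable fun n => ‖f i n‖) →
    Summable (fun m : Fin k → ℕ+ => ‖∏ i, f i (m i)‖) ∧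
    HasSum (fun m : Fin k → ℕ+ => ∏ i, f i (m i)) (∏ i, ∑' n, f i n) := by
  induction k with
  | zero =>
    intro f hf
    constructor
    · simp only [Finset.univ_eq_empty, Finset.prod_empty, norm_one]
      exact (hasSum_single (default : Fin 0 → ℕ+) (fun b hb => absurd (Subsingleton.elim b default) hb)).summable
    · simp only [Finset.univ_eq_empty, Finset.prod_empty]
      exact hasSum_single (default : Fin 0 → ℕ+) (fun b hb => absurd (Subsingleton.elim b default) hb)
  | succ k ih =>
    intro f hf
    obtain ⟨Sg, Hg⟩ := ih (fun i => f i.succ) (fun i => hf i.succ)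
    have h0 : HasSum (f 0) (∑' n, f 0 n) := ((hf 0).of_norm).hasSum
    let e : (Fin (k+1) → ℕ+) ≃ ℕ+ × (Fin k → ℕ+) :=
      { toFun := fun m => (m 0, fun i => m i.succ)
        invFun := fun p => Fin.cons p.1 p.2
        left_inv := fun m => funext (Fin.cases (by simp) (fun i => by simp))
        right_inv := fun p => by simp }
    have hFe : ∀ m : Fin (k+1) → ℕ+, ∏ i, f i (m i)
        = f 0 (e m).1 * ∏ i : Fin k, f i.succ ((e m).2 i) := by
      intro m
      rw [Fin.prod_univ_succ]
      rfl
    have hnorm := (hf 0).mul_norm Sg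
    have hmulsum := hnorm.of_norm
    have hmul := h0.mul Hg hmulsum
    constructor
    · have := (e.summable_iff (f := fun p : ℕ+ × (Fin k → ℕ+) =>
        ‖f 0 p.1 * ∏ i : Fin k, f i.succ (p.2 i)‖)).mpr hnorm
      exact this.congr fun m => by rw [Function.comp_apply, ← hFe]
    · have := (e.hasSum_iff (f := fun p : ℕ+ × (Fin k → ℕ+) =>
        f 0 p.1 * ∏ i : Fin k, f i.succ (p.2 i))
        (a := (∑' n, f 0 n) * ∏ i : Fin k, ∑' n, f i.succ n)).mpr hmul
      have h2 : HasSum (fun m : Fin (k+1) → ℕ+ => ∏ i, f i (m i))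
          ((∑' n, f 0 n) * ∏ i : Fin k, ∑' n, f i.succ n) :=
        this.congr_fun fun m => (hFe m).trans rfl
      rw [Fin.prod_univ_succ]
      exact h2

theorem stmt_12 (k : ℕ) (hk : 2 ≤ k) (z : Fin k → ℂ) (hz : ∀ i, 1 < (z i).re) :
    ∑' n : Fin k → ℕ+,
        (((Finset.univ.gcd fun i => ((n i : ℕ))).divisors.card : ℂ)
          / ∏ i, ((n i : ℕ) : ℂ) ^ (z i))
      = (∏ i, riemannZeta (z i)) * riemannZeta (∑ i, z i) := by
  classical
  have hk0 : 0 < k := by omega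
  set c : (Fin k → ℕ+) → ℂ := fun n => (∏ i, ((n i : ℕ) : ℂ) ^ (z i))⁻¹ with hc
  set g : (Fin k → ℕ+) → ℕ := fun n => Finset.univ.gcd fun i => ((n i : ℕ)) with hgdef
  have hg0 : ∀ n, g n ≠ 0 := by
    intro n h
    have := (Finset.gcd_eq_zero_iff).mp h ⟨0, hk0⟩ (Finset.mem_univ _)
    exact (n ⟨0, hk0⟩).ne_zero this
  have hres : 1 < (∑ i, z i).re := by
    rw [Complex.re_sum]
    have h1 : ∀ i ∈ Finset.univ, (1 : ℝ) ≤ (z i).re := fun i _ => (hz i).le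
    have h2 := Finset.card_nsmul_le_sum Finset.univ (fun i => (z i).re) 1 h1
    rw [Finset.card_univ, Fintype.card_fin, nsmul_eq_mul, mul_one] at h2
    have h3 : (2 : ℝ) ≤ (k : ℝ) := by exact_mod_cast hk
    linarith
  set A : ℕ+ → ℂ := fun d => ((d : ℕ) : ℂ) ^ (-∑ i, z i) with hA
  set B : (Fin k → ℕ+) → ℂ := fun m => ∏ i, ((m i : ℕ) : ℂ) ^ (-(z i)) with hB
  set G : ℕ+ × (Fin k → ℕ+) → ℂ := fun p => c (fun i => p.1 * p.2 i) with hG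
  have hGAB : ∀ p : ℕ+ × (Fin k → ℕ+), G p = A p.1 * B p.2 := by
    rintro ⟨d, m⟩
    have hd0 : ((d : ℕ) : ℂ) ≠ 0 := Nat.cast_ne_zero.mpr d.ne_zero
    show (∏ i, (((d * m i : ℕ+) : ℕ) : ℂ) ^ (z i))⁻¹ = A d * B m
    have e1 : ∀ i : Fin k, (((d * m i : ℕ+) : ℕ) : ℂ) ^ (z i)
        = ((d : ℕ) : ℂ) ^ (z i) * (((m i : ℕ) : ℂ) ^ (z i)) := by
      intro i
      rw [PNat.mul_coe, Nat.cast_mul, Complex.natCast_mul_natCast_cpow]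
    rw [Finset.prod_congr rfl fun i _ => e1 i, Finset.prod_mul_distrib,
      ← aux_cpow_sum Finset.univ hd0, hA, hB]
    simp [Complex.cpow_neg, mul_inv, Finset.prod_inv_distrib, mul_comm]
  have hAsum : HasSum A (riemannZeta (∑ i, z i)) := aux_hasSum_pnat_cpow hres
  have hAnorm : Summable fun d => ‖A d‖ := aux_summable_norm_pnat_cpow hres
  obtain ⟨hBnorm, hBsum0⟩ := aux_pi_hasSum k (fun i => fun m : ℕ+ => ((m : ℕ) : ℂ) ^ (-(z i)))
    (fun i => aux_summable_norm_pnat_cpow (hz i))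
  have hBsum : HasSum B (∏ i, riemannZeta (z i)) := by
    have hzt : (∏ i, ∑' n : ℕ+, ((n : ℕ) : ℂ) ^ (-(z i))) = ∏ i, riemannZeta (z i) :=
      Finset.prod_congr rfl fun i _ => (aux_hasSum_pnat_cpow (hz i)).tsum_eq
    rw [← hzt]
    exact hBsum0
  have hGnorm := hAnorm.mul_norm hBnorm
  have hGsum' := hGnorm.of_norm
  have hGhas0 := hAsum.mul hBsum hGsum'
  have hGhas : HasSum G (riemannZeta (∑ i, z i) * ∏ i, riemannZeta (z i)) :=
    hGhas0.congr_fun fun p => (hGAB p).trans rfl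
  have hGsum : Summable G := hGhas.summable
  set h : ℕ+ → (Fin k → ℕ+) → ℂ := fun d n => if (d : ℕ) ∣ g n then c n else 0 with hh
  -- step 1
  have step1 : ∀ n, ((g n).divisors.card : ℂ) * c n = ∑' d : ℕ+, h d n := by
    intro n
    have hgn := hg0 n
    have h3 : ∑' d : ℕ+, h d n = ∑' j : ℕ, (if j ∣ g n then c n else 0) := by
      apply Function.Injective.tsum_eq (f := fun j : ℕ => if j ∣ g n then c n else 0)
        (g := fun d : ℕ+ => (d : ℕ)) PNat.coe_injective
      intro j hj
      simp only [Function.mem_support] at hj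
      have hdvd : j ∣ g n := by by_contra hcon; exact hj (if_neg hcon)
      have hj0 : j ≠ 0 := by rintro rfl; exact hgn (zero_dvd_iff.mp hdvd)
      exact ⟨⟨j, Nat.pos_of_ne_zero hj0⟩, rfl⟩
    have h1 : ∑' j : ℕ, (if j ∣ g n then c n else 0)
        = ∑ j ∈ (g n).divisors, (if j ∣ g n then c n else 0) := by
      apply tsum_eq_sum
      intro j hj
      rw [if_neg]
      intro hdvd
      exact hj (Nat.mem_divisors.mpr ⟨hdvd, hgn⟩)
    have h2 : ∑ j ∈ (g n).divisors, (if j ∣ g n then c n else 0)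
        = ((g n).divisors.card : ℂ) * c n := by
      rw [Finset.sum_congr rfl fun j hj => if_pos (Nat.mem_divisors.mp hj).1,
        Finset.sum_const, nsmul_eq_mul]
    rw [h3, h1, h2]
  -- step 2
  have step2 : ∀ d : ℕ+, ∑' n, h d n = ∑' m, G (d, m) := by
    intro d
    have hinj : Function.Injective (fun m : Fin k → ℕ+ => (fun i => d * m i : Fin k → ℕ+)) := by
      intro a b hab
      funext i
      exact mul_left_cancel (congrFun hab i)
    have hsupp : Function.support (fun n => h d n)
        ⊆ Set.range (fun m : Fin k → ℕ+ => (fun i => d * m i : Fin k → ℕ+)) := by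
      intro n hn
      simp only [Function.mem_support] at hn
      have hdvd : (d : ℕ) ∣ g n := by by_contra hcon; exact hn (if_neg hcon)
      have hdi : ∀ i, (d : ℕ) ∣ (n i : ℕ) := fun i =>
        hdvd.trans (Finset.gcd_dvd (Finset.mem_univ i))
      refine ⟨fun i => ⟨(n i : ℕ) / (d : ℕ),
        Nat.div_pos (Nat.le_of_dvd (n i).pos (hdi i)) d.pos⟩, ?_⟩
      funext i
      apply PNat.coe_injective
      show ((d : ℕ) * ((n i : ℕ) / (d : ℕ)) : ℕ) = (n i : ℕ)
      exact Nat.mul_div_cancel' (hdi i)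
    have hkey := Function.Injective.tsum_eq (f := fun n => h d n) hinj hsupp
    rw [← hkey]
    apply tsum_congr
    intro m
    have hdg : (d : ℕ) ∣ g (fun i => d * m i) := by
      apply Finset.dvd_gcd
      intro i _
      exact ⟨(m i : ℕ), by rw [PNat.mul_coe]⟩
    show h d (fun i => d * m i) = G (d, m)
    rw [hh]
    simp only [if_pos hdg]
    rfl
  -- summability of uncurried h
  have hPhiinj : Function.Injective
      (fun p : ℕ+ × (Fin k → ℕ+) => ((p.1, fun i => p.1 * p.2 i) : ℕ+ × (Fin k → ℕ+))) := by
    rintro ⟨d₁, m₁⟩ ⟨d₂, m₂⟩ hpq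
    rw [Prod.ext_iff] at hpq
    obtain ⟨h1, h2⟩ := hpq
    simp only at h1 h2
    subst h1
    simp only [Prod.mk.injEq, true_and]
    funext i
    exact mul_left_cancel (congrFun h2 i)
  have hvanish : ∀ x ∉ Set.range
      (fun p : ℕ+ × (Fin k → ℕ+) => ((p.1, fun i => p.1 * p.2 i) : ℕ+ × (Fin k → ℕ+))),
      Function.uncurry h x = 0 := by
    rintro ⟨d, n⟩ hx
    by_contra hne
    have hdvd : (d : ℕ) ∣ g n := by
      by_contra hcon
      exact hne (if_neg hcon)
    have hdi : ∀ i, (d : ℕ) ∣ (n i : ℕ) := fun i =>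
      hdvd.trans (Finset.gcd_dvd (Finset.mem_univ i))
    apply hx
    refine ⟨(d, fun i => ⟨(n i : ℕ) / (d : ℕ),
      Nat.div_pos (Nat.le_of_dvd (n i).pos (hdi i)) d.pos⟩), ?_⟩
    simp only [Prod.mk.injEq, true_and]
    funext i
    apply PNat.coe_injective
    show ((d : ℕ) * ((n i : ℕ) / (d : ℕ)) : ℕ) = (n i : ℕ)
    exact Nat.mul_div_cancel' (hdi i)
  have huncur : Summable (Function.uncurry h) := by
    have hcomp : Summable ((Function.uncurry h)
        ∘ (fun p : ℕ+ × (Fin k → ℕ+) => ((p.1, fun i => p.1 * p.2 i) : ℕ+ × (Fin k → ℕ+)))) := by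
      apply hGsum.congr
      rintro ⟨d, m⟩
      have hdg : (d : ℕ) ∣ g (fun i => d * m i) := by
        apply Finset.dvd_gcd
        intro i _
        exact ⟨(m i : ℕ), by rw [PNat.mul_coe]⟩
      show G (d, m) = h d (fun i => d * m i)
      rw [hh]
      simp only [if_pos hdg]
      rfl
    exact (hPhiinj.summable_iff hvanish).mp hcomp
  calc ∑' n : Fin k → ℕ+, (((g n).divisors.card : ℂ) / ∏ i, ((n i : ℕ) : ℂ) ^ (z i))
      = ∑' n, ((g n).divisors.card : ℂ) * c n := tsum_congr fun n => div_eq_mul_inv _ _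
    _ = ∑' n, ∑' d : ℕ+, h d n := tsum_congr step1
    _ = ∑' d : ℕ+, ∑' n, h d n := huncur.tsum_comm
    _ = ∑' d : ℕ+, ∑' m, G (d, m) := tsum_congr step2
    _ = ∑' p, G p := (hGsum.tsum_prod).symm
    _ = riemannZeta (∑ i, z i) * ∏ i, riemannZeta (z i) := hGhas.tsum_eq
    _ = (∏ i, riemannZeta (z i)) * riemannZeta (∑ i, z i) := mul_comm _ _
end

section
/- For complex z₁, z₂ with Re z₁ > 2, Re z₂ > 2, Re(z₁ + z₂) > 3: Σ_{n₁,n₂ ≥ 1} lcm(n₁,n₂)/(n₁^{z₁} n₂^{z₂}) = ζ(z₁−1)·ζ(z₂−1)·ζ(z₁+z₂−1)/ζ(z₁+z₂−2). -/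
open scoped BigOperators
open Complex

namespace Stmt17Aux

/-- Coprime pairs of positive naturals. -/
abbrev S := {p : ℕ+ × ℕ+ // Nat.Coprime (p.1 : ℕ) (p.2 : ℕ)}

def ψ (x : ℕ+ × S) : ℕ+ × ℕ+ := (x.1 * x.2.1.1, x.1 * x.2.1.2)

lemma ψ_bij : Function.Bijective ψ := by
  constructor
  · rintro ⟨d, ⟨⟨a, b⟩, hab⟩⟩ ⟨d', ⟨⟨a', b'⟩, hab'⟩⟩ h
    simp only [ψ, Prod.mk.injEq] at h
    obtain ⟨h1, h2⟩ := h
    have hd : d = d' := by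
      have e1 : (d : ℕ) * a = (d' : ℕ) * a' := by exact_mod_cast congrArg (fun t : ℕ+ => (t : ℕ)) h1
      have e2 : (d : ℕ) * b = (d' : ℕ) * b' := by exact_mod_cast congrArg (fun t : ℕ+ => (t : ℕ)) h2
      have g1 : Nat.gcd ((d : ℕ) * a) ((d : ℕ) * b) = d := by
        rw [Nat.gcd_mul_left, hab, mul_one]
      have g2 : Nat.gcd ((d' : ℕ) * a') ((d' : ℕ) * b') = d' := by
        rw [Nat.gcd_mul_left, hab', mul_one]
      have : (d : ℕ) = (d' : ℕ) := by rw [← g1, e1, e2, g2]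
      exact_mod_cast this
    subst hd
    have ha : a = a' := by exact mul_left_cancel h1
    have hb : b = b' := by exact mul_left_cancel h2
    simp [ha, hb]
  · rintro ⟨n₁, n₂⟩
    have hg : 0 < Nat.gcd (n₁ : ℕ) (n₂ : ℕ) := Nat.gcd_pos_of_pos_left _ n₁.pos
    have ha : 0 < (n₁ : ℕ) / Nat.gcd (n₁ : ℕ) (n₂ : ℕ) :=
      Nat.div_pos (Nat.le_of_dvd n₁.pos (Nat.gcd_dvd_left _ _)) hg
    have hb : 0 < (n₂ : ℕ) / Nat.gcd (n₁ : ℕ) (n₂ : ℕ) :=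
      Nat.div_pos (Nat.le_of_dvd n₂.pos (Nat.gcd_dvd_right _ _)) hg
    refine ⟨⟨⟨_, hg⟩, ⟨⟨⟨_, ha⟩, ⟨_, hb⟩⟩, Nat.coprime_div_gcd_div_gcd hg⟩⟩, ?_⟩
    simp only [ψ, Prod.mk.injEq]
    constructor <;>
    · apply PNat.coe_injective
      refine (PNat.mul_coe _ _).trans ?_
      push_cast
      simp [Nat.mul_div_cancel' (Nat.gcd_dvd_left (n₁:ℕ) (n₂:ℕ)),
        Nat.mul_div_cancel' (Nat.gcd_dvd_right (n₁:ℕ) (n₂:ℕ))]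

noncomputable def E : ℕ+ × S ≃ ℕ+ × ℕ+ := Equiv.ofBijective ψ ψ_bij

lemma E_apply (x : ℕ+ × S) : E x = (x.1 * x.2.1.1, x.1 * x.2.1.2) := rfl

lemma summable_norm_pnat_cpow {c : ℂ} (hc : c.re < -1) :
    Summable fun n : ℕ+ => ‖((n : ℕ) : ℂ) ^ c‖ := by
  have h : Summable fun n : ℕ+ => ((n : ℕ) : ℝ) ^ c.re :=
    (Real.summable_nat_rpow.2 hc).comp_injective PNat.coe_injective
  refine h.congr fun n => ?_
  rw [norm_natCast_cpow_of_pos n.pos]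

lemma tsum_pnat_cpow {s : ℂ} (hs : 1 < s.re) :
    ∑' n : ℕ+, ((n : ℕ) : ℂ) ^ (-s) = riemannZeta s := by
  rw [zeta_eq_tsum_one_div_nat_cpow hs]
  have hs0 : s ≠ 0 := by intro h; rw [h] at hs; simp at hs; linarith
  have key : ∑' n : ℕ+, (1 / ((n : ℕ) : ℂ) ^ s) = ∑' n : ℕ, 1 / (n : ℂ) ^ s := by
    refine Function.Injective.tsum_eq (g := fun n : ℕ+ => (n : ℕ))
      (f := fun n : ℕ => 1 / (n : ℂ) ^ s) PNat.coe_injective ?_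
    intro n hn
    simp only [Function.mem_support] at hn
    have hn0 : n ≠ 0 := by
      intro h; subst h; apply hn; simp [zero_cpow hs0]
    exact ⟨⟨n, Nat.pos_of_ne_zero hn0⟩, rfl⟩
  rw [← key]
  congr 1
  funext n
  rw [cpow_neg, one_div]

lemma pnat_div_cpow (n : ℕ+) (z : ℂ) :
    ((n : ℕ) : ℂ) / ((n : ℕ) : ℂ) ^ z = ((n : ℕ) : ℂ) ^ (-(z - 1)) := by
  have hn : ((n : ℕ) : ℂ) ≠ 0 := by exact_mod_cast n.ne_zero
  rw [neg_sub, cpow_sub _ _ hn, cpow_one]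

lemma mul_cpow_pnat (d a : ℕ+) (c : ℂ) :
    (((d * a : ℕ+) : ℕ) : ℂ) ^ c = ((d : ℕ) : ℂ) ^ c * ((a : ℕ) : ℂ) ^ c := by
  rw [PNat.mul_coe, Nat.cast_mul, natCast_mul_natCast_cpow]

lemma term2_eq (c₁ c₂ : ℂ) (d a b : ℕ+) :
    (((d * a : ℕ+) : ℕ) : ℂ) ^ c₁ * (((d * b : ℕ+) : ℕ) : ℂ) ^ c₂
      = ((d : ℕ) : ℂ) ^ (c₁ + c₂) * (((a : ℕ) : ℂ) ^ c₁ * ((b : ℕ) : ℂ) ^ c₂) := by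
  have hd : ((d : ℕ) : ℂ) ≠ 0 := by exact_mod_cast d.ne_zero
  rw [mul_cpow_pnat, mul_cpow_pnat, cpow_add _ _ hd]
  ring

lemma term_eq (z₁ z₂ : ℂ) (d a b : ℕ+) (hab : Nat.Coprime (a : ℕ) (b : ℕ)) :
    (Nat.lcm ((d * a : ℕ+) : ℕ) ((d * b : ℕ+) : ℕ) : ℂ)
        / ((((d * a : ℕ+) : ℕ) : ℂ) ^ z₁ * (((d * b : ℕ+) : ℕ) : ℂ) ^ z₂)
      = ((d : ℕ) : ℂ) ^ (-(z₁ + z₂ - 1))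
          * (((a : ℕ) : ℂ) ^ (-(z₁ - 1)) * ((b : ℕ) : ℂ) ^ (-(z₂ - 1))) := by
  have hd : ((d : ℕ) : ℂ) ≠ 0 := by exact_mod_cast d.ne_zero
  have hlcm : Nat.lcm ((d * a : ℕ+) : ℕ) ((d * b : ℕ+) : ℕ) = (d : ℕ) * ((a : ℕ) * (b : ℕ)) := by
    rw [PNat.mul_coe, PNat.mul_coe, Nat.lcm_mul_left, Nat.Coprime.lcm_eq_mul hab]
  rw [hlcm, mul_cpow_pnat, mul_cpow_pnat,
    ← pnat_div_cpow d (z₁ + z₂), ← pnat_div_cpow a z₁, ← pnat_div_cpow b z₂,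
    cpow_add _ _ hd, div_mul_div_comm, div_mul_div_comm]
  push_cast
  congr 1 <;> ring

end Stmt17Aux

open Stmt17Aux in
theorem stmt_17 (z₁ z₂ : ℂ) (h₁ : 2 < z₁.re) (h₂ : 2 < z₂.re) (h₃ : 3 < (z₁ + z₂).re) :
    ∑' n : ℕ+ × ℕ+,
        ((Nat.lcm (n.1 : ℕ) (n.2 : ℕ) : ℂ) / (((n.1 : ℕ) : ℂ) ^ z₁ * ((n.2 : ℕ) : ℂ) ^ z₂))
      = riemannZeta (z₁ - 1) * riemannZeta (z₂ - 1) * riemannZeta (z₁ + z₂ - 1)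
          / riemannZeta (z₁ + z₂ - 2) := by
  have hc₁re : (-(z₁ - 1)).re < -1 := by simp; linarith
  have hc₂re : (-(z₂ - 1)).re < -1 := by simp; linarith
  have hc₃re : (-(z₁ + z₂ - 1)).re < -1 := by simp; linarith
  have hc₄re : (-(z₁ + z₂ - 2)).re < -1 := by simp; linarith
  have hS₁ : Summable fun n : ℕ+ => ‖((n : ℕ) : ℂ) ^ (-(z₁ - 1))‖ := summable_norm_pnat_cpow hc₁re
  have hS₂ : Summable fun n : ℕ+ => ‖((n : ℕ) : ℂ) ^ (-(z₂ - 1))‖ := summable_norm_pnat_cpow hc₂re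
  have hS₃ : Summable fun n : ℕ+ => ‖((n : ℕ) : ℂ) ^ (-(z₁ + z₂ - 1))‖ :=
    summable_norm_pnat_cpow hc₃re
  have hS₄ : Summable fun n : ℕ+ => ‖((n : ℕ) : ℂ) ^ (-(z₁ + z₂ - 2))‖ :=
    summable_norm_pnat_cpow hc₄re
  have hSfull : Summable fun m : ℕ+ × ℕ+ =>
      ‖((m.1 : ℕ) : ℂ) ^ (-(z₁ - 1)) * ((m.2 : ℕ) : ℂ) ^ (-(z₂ - 1))‖ :=
    Summable.mul_norm (f := fun n : ℕ+ => ((n : ℕ) : ℂ) ^ (-(z₁ - 1)))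
      (g := fun n : ℕ+ => ((n : ℕ) : ℂ) ^ (-(z₂ - 1))) hS₁ hS₂
  have hSv : Summable fun p : S =>
      ‖((p.1.1 : ℕ) : ℂ) ^ (-(z₁ - 1)) * ((p.1.2 : ℕ) : ℂ) ^ (-(z₂ - 1))‖ :=
    hSfull.comp_injective Subtype.val_injective
  set C : ℂ := ∑' p : S, ((p.1.1 : ℕ) : ℂ) ^ (-(z₁ - 1)) * ((p.1.2 : ℕ) : ℂ) ^ (-(z₂ - 1)) with hC
  -- Equation 1: ζ(z₁-1) ζ(z₂-1) = ζ(z₁+z₂-2) * C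
  have e1 : riemannZeta (z₁ - 1) * riemannZeta (z₂ - 1) = riemannZeta (z₁ + z₂ - 2) * C := by
    rw [← tsum_pnat_cpow (s := z₁ - 1) (by simp; linarith),
      ← tsum_pnat_cpow (s := z₂ - 1) (by simp; linarith),
      tsum_mul_tsum_of_summable_norm (f := fun n : ℕ+ => ((n : ℕ) : ℂ) ^ (-(z₁ - 1)))
        (g := fun n : ℕ+ => ((n : ℕ) : ℂ) ^ (-(z₂ - 1))) hS₁ hS₂,
      ← (E.tsum_eq fun m : ℕ+ × ℕ+ =>
          ((m.1 : ℕ) : ℂ) ^ (-(z₁ - 1)) * ((m.2 : ℕ) : ℂ) ^ (-(z₂ - 1)))]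
    have step : ∀ x : ℕ+ × S,
        (((E x).1 : ℕ) : ℂ) ^ (-(z₁ - 1)) * (((E x).2 : ℕ) : ℂ) ^ (-(z₂ - 1))
          = ((x.1 : ℕ) : ℂ) ^ (-(z₁ - 1) + -(z₂ - 1))
            * (((x.2.1.1 : ℕ) : ℂ) ^ (-(z₁ - 1)) * ((x.2.1.2 : ℕ) : ℂ) ^ (-(z₂ - 1))) := by
      intro x
      rw [E_apply]
      exact term2_eq _ _ x.1 x.2.1.1 x.2.1.2
    rw [tsum_congr step, ← tsum_mul_tsum_of_summable_norm
        (f := fun n : ℕ+ => ((n : ℕ) : ℂ) ^ (-(z₁ - 1) + -(z₂ - 1)))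
        (g := fun p : S => ((p.1.1 : ℕ) : ℂ) ^ (-(z₁ - 1)) * ((p.1.2 : ℕ) : ℂ) ^ (-(z₂ - 1)))
        (summable_norm_pnat_cpow (by simp; linarith)) hSv,
      show -(z₁ - 1) + -(z₂ - 1) = -(z₁ + z₂ - 2) by ring,
      tsum_pnat_cpow (s := z₁ + z₂ - 2) (by simp; linarith)]
  -- Equation 2: LHS = ζ(z₁+z₂-1) * C
  have e2 : (∑' n : ℕ+ × ℕ+,
        ((Nat.lcm (n.1 : ℕ) (n.2 : ℕ) : ℂ) / (((n.1 : ℕ) : ℂ) ^ z₁ * ((n.2 : ℕ) : ℂ) ^ z₂)))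
      = riemannZeta (z₁ + z₂ - 1) * C := by
    rw [← (E.tsum_eq fun n : ℕ+ × ℕ+ =>
        ((Nat.lcm (n.1 : ℕ) (n.2 : ℕ) : ℂ) / (((n.1 : ℕ) : ℂ) ^ z₁ * ((n.2 : ℕ) : ℂ) ^ z₂)))]
    have step : ∀ x : ℕ+ × S,
        ((Nat.lcm ((E x).1 : ℕ) ((E x).2 : ℕ) : ℂ)
            / ((((E x).1 : ℕ) : ℂ) ^ z₁ * (((E x).2 : ℕ) : ℂ) ^ z₂))
          = ((x.1 : ℕ) : ℂ) ^ (-(z₁ + z₂ - 1))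
            * (((x.2.1.1 : ℕ) : ℂ) ^ (-(z₁ - 1)) * ((x.2.1.2 : ℕ) : ℂ) ^ (-(z₂ - 1))) := by
      intro x
      rw [E_apply]
      exact term_eq z₁ z₂ x.1 x.2.1.1 x.2.1.2 x.2.2
    rw [tsum_congr step, ← tsum_mul_tsum_of_summable_norm
        (f := fun n : ℕ+ => ((n : ℕ) : ℂ) ^ (-(z₁ + z₂ - 1)))
        (g := fun p : S => ((p.1.1 : ℕ) : ℂ) ^ (-(z₁ - 1)) * ((p.1.2 : ℕ) : ℂ) ^ (-(z₂ - 1)))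
        hS₃ hSv,
      tsum_pnat_cpow (s := z₁ + z₂ - 1) (by simp; linarith)]
  have hne : riemannZeta (z₁ + z₂ - 2) ≠ 0 :=
    riemannZeta_ne_zero_of_one_lt_re (by simp; linarith)
  rw [e2]
  rw [eq_div_iff hne]
  rw [e1]
  ring
end

section
/- Σ_{(n₁,n₂) ∈ ℕ², n₁² + n₂² ≤ x} lcm(n₁,n₂) = (C₂/8)·x² + O(x^{3/2} log x), where C₂ = ζ(3)/ζ(2), and the sum is over pairs of positive integers. -/
open scoped BigOperators
open Finset ArithmeticFunction


lemma gauss (m : ℕ) : ∑ j ∈ Icc 1 m, (j:ℝ) = m*(m+1)/2 := by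
  induction m with
  | zero => simp
  | succ n ih => rw [Finset.sum_Icc_succ_top (by norm_num)]; push_cast; rw [ih]; ring

lemma nicomachus (m : ℕ) : ∑ j ∈ Icc 1 m, (j:ℝ)^3 = (m*(m+1)/2)^2 := by
  induction m with
  | zero => simp
  | succ n ih => rw [Finset.sum_Icc_succ_top (by norm_num)]; push_cast; rw [ih]; ring

lemma sum_ite_le (N : ℕ) (t : ℝ) (ht : 0 ≤ t) (hmN : ⌊t⌋₊ ≤ N) (F : ℕ → ℝ) :
    (∑ j ∈ Icc 1 N, if (j:ℝ) ≤ t then F j else 0) = ∑ j ∈ Icc 1 ⌊t⌋₊, F j := by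
  rw [← Finset.sum_filter]
  congr 1
  ext j
  simp only [mem_filter, mem_Icc]
  constructor
  · rintro ⟨⟨h1, _⟩, h2⟩
    exact ⟨h1, Nat.le_floor h2⟩
  · rintro ⟨h1, h2⟩
    refine ⟨⟨h1, le_trans h2 hmN⟩, ?_⟩
    calc (j:ℝ) ≤ ⌊t⌋₊ := by exact_mod_cast h2
      _ ≤ t := Nat.floor_le ht

lemma u_bound (t : ℝ) (ht : 0 ≤ t) :
    |((⌊t⌋₊:ℝ)*((⌊t⌋₊:ℝ)+1))/2 - t^2/2| ≤ t/2 := by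
  have h1 : (⌊t⌋₊:ℝ) ≤ t := Nat.floor_le ht
  have h2 : t < (⌊t⌋₊:ℝ) + 1 := Nat.lt_floor_add_one t
  have h0 : (0:ℝ) ≤ (⌊t⌋₊:ℝ) := Nat.cast_nonneg _
  rw [abs_le]
  constructor
  · nlinarith
  · nlinarith

lemma Pcalc (N : ℕ) (t : ℝ) (ht : 0 ≤ t) (htN : t ≤ N) :
    (∑ j ∈ Icc 1 N, if (j:ℝ) ≤ t then (j:ℝ) else 0) = ((⌊t⌋₊:ℝ)*((⌊t⌋₊:ℝ)+1))/2 := by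
  have hfl : ⌊t⌋₊ ≤ N := by
    have := Nat.floor_le_floor htN
    simpa using this
  rw [sum_ite_le N t ht hfl, gauss]

set_option maxHeartbeats 2000000 in
lemma Gest (N : ℕ) (y : ℝ) (hy : 0 ≤ y) (hN : Real.sqrt y ≤ N) :
    |(∑ p ∈ Icc 1 N ×ˢ Icc 1 N,
        if ((p.1:ℝ)^2 + (p.2:ℝ)^2 ≤ y) then (p.1:ℝ)*(p.2:ℝ) else 0)
      - y^2/8| ≤ y * Real.sqrt y := by
  set s := Real.sqrt y with hs
  have hs0 : 0 ≤ s := Real.sqrt_nonneg y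
  have hss : s^2 = y := Real.sq_sqrt hy
  by_cases hy1 : y < 1
  · have hG : (∑ p ∈ Icc 1 N ×ˢ Icc 1 N,
        if ((p.1:ℝ)^2 + (p.2:ℝ)^2 ≤ y) then (p.1:ℝ)*(p.2:ℝ) else 0) = 0 := by
      apply Finset.sum_eq_zero
      rintro ⟨j1, j2⟩ hp
      simp only [mem_product, mem_Icc] at hp
      rw [if_neg]
      push_neg
      have e1 : (1:ℝ) ≤ (j1:ℝ) := by exact_mod_cast hp.1.1
      have e2 : (1:ℝ) ≤ (j2:ℝ) := by exact_mod_cast hp.2.1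
      show y < (j1:ℝ)^2 + (j2:ℝ)^2
      nlinarith
    rw [hG]
    have hys : y ≤ s := by
      rw [hs]
      exact (Real.le_sqrt hy hy).mpr (by nlinarith)
    rw [abs_of_nonpos (by nlinarith)]
    nlinarith
  push_neg at hy1
  have hs1 : (1:ℝ) ≤ s := by
    rw [hs, show (1:ℝ) = Real.sqrt 1 by simp]
    exact Real.sqrt_le_sqrt hy1
  rw [Finset.sum_product]
  have inner : ∀ j1 ∈ Icc 1 N,
      (∑ j2 ∈ Icc 1 N, if ((j1:ℝ)^2 + (j2:ℝ)^2 ≤ y) then (j1:ℝ)*(j2:ℝ) else 0)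
      = (j1:ℝ) * ((⌊Real.sqrt (y - (j1:ℝ)^2)⌋₊ : ℝ) * ((⌊Real.sqrt (y - (j1:ℝ)^2)⌋₊:ℝ)+1)/2) := by
    intro j1 _
    calc (∑ j2 ∈ Icc 1 N, if ((j1:ℝ)^2 + (j2:ℝ)^2 ≤ y) then (j1:ℝ)*(j2:ℝ) else 0)
        = ∑ j2 ∈ Icc 1 N, (j1:ℝ) * (if ((j2:ℝ) ≤ Real.sqrt (y - (j1:ℝ)^2)) then (j2:ℝ) else 0) := by
          apply Finset.sum_congr rfl
          intro j2 hj2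
          simp only [mem_Icc] at hj2
          have hj2pos : (0:ℝ) < (j2:ℝ) := by exact_mod_cast hj2.1
          rw [mul_ite, mul_zero]
          congr 1
          rw [eq_iff_iff, Real.le_sqrt' hj2pos]
          constructor
          · intro h; linarith
          · intro h; linarith
      _ = (j1:ℝ) * ∑ j2 ∈ Icc 1 N, (if ((j2:ℝ) ≤ Real.sqrt (y - (j1:ℝ)^2)) then (j2:ℝ) else 0) := by
          rw [Finset.mul_sum]
      _ = _ := by
          rw [Pcalc N _ (Real.sqrt_nonneg _) (le_trans (Real.sqrt_le_sqrt (by nlinarith)) hN)]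
  rw [Finset.sum_congr rfl inner]
  set ms := ⌊s⌋₊ with hms
  have hsN : s ≤ (N:ℝ) := hN
  set B := ((ms:ℝ)*((ms:ℝ)+1))/2 with hBdef
  have hB : (∑ j ∈ Icc 1 N, if (j:ℝ) ≤ s then (j:ℝ) else 0) = B := Pcalc N s hs0 hsN
  have hBb : |B - y/2| ≤ s/2 := by
    have := u_bound s hs0
    rw [hss] at this
    exact this
  have hM : (∑ j ∈ Icc 1 N, if (j:ℝ) ≤ s then (j:ℝ)*((y - (j:ℝ)^2)/2) else 0) = (y*B - B^2)/2 := by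
    rw [sum_ite_le N s hs0 (by have := Nat.floor_le_floor hsN; simpa using this)]
    have hc : ∀ j ∈ Icc 1 ⌊s⌋₊, (j:ℝ)*((y - (j:ℝ)^2)/2) = (y/2)*(j:ℝ) - (1/2)*(j:ℝ)^3 := by
      intro j _; ring
    rw [Finset.sum_congr rfl hc, Finset.sum_sub_distrib, ← Finset.mul_sum, ← Finset.mul_sum,
      gauss, nicomachus]
    rw [hBdef, hms]
    ring
  have key : ∀ j1 ∈ Icc 1 N,
      |(j1:ℝ) * ((⌊Real.sqrt (y - (j1:ℝ)^2)⌋₊ : ℝ) * ((⌊Real.sqrt (y - (j1:ℝ)^2)⌋₊:ℝ)+1)/2)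
        - (if (j1:ℝ) ≤ s then (j1:ℝ)*((y - (j1:ℝ)^2)/2) else 0)|
      ≤ (if (j1:ℝ) ≤ s then (j1:ℝ) else 0) * (s/2) := by
    intro j1 _
    have hj1nn : (0:ℝ) ≤ (j1:ℝ) := Nat.cast_nonneg _
    by_cases hj : (j1:ℝ) ≤ s
    · rw [if_pos hj, if_pos hj]
      have hyj : 0 ≤ y - (j1:ℝ)^2 := by nlinarith
      set t := Real.sqrt (y - (j1:ℝ)^2) with htdef
      have ht0 : 0 ≤ t := Real.sqrt_nonneg _
      have ht2 : t^2 = y - (j1:ℝ)^2 := Real.sq_sqrt hyj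
      have hts : t ≤ s := Real.sqrt_le_sqrt (by nlinarith)
      have hub := u_bound t ht0
      calc |(j1:ℝ) * ((⌊t⌋₊ : ℝ) * ((⌊t⌋₊:ℝ)+1)/2) - (j1:ℝ)*((y - (j1:ℝ)^2)/2)|
          = (j1:ℝ) * |((⌊t⌋₊:ℝ)*((⌊t⌋₊:ℝ)+1))/2 - t^2/2| := by
            rw [← abs_of_nonneg hj1nn, ← abs_mul, abs_of_nonneg hj1nn]
            congr 1
            rw [ht2]
            ring
        _ ≤ (j1:ℝ) * (t/2) := mul_le_mul_of_nonneg_left hub hj1nn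
        _ ≤ (j1:ℝ) * (s/2) := mul_le_mul_of_nonneg_left (by linarith) hj1nn
    · rw [if_neg hj, if_neg hj]
      push_neg at hj
      have hneg : y - (j1:ℝ)^2 ≤ 0 := by nlinarith
      have h0 : Real.sqrt (y - (j1:ℝ)^2) = 0 := Real.sqrt_eq_zero_of_nonpos hneg
      rw [h0]
      simp
  have habs1 : |(∑ j1 ∈ Icc 1 N, (j1:ℝ) * ((⌊Real.sqrt (y - (j1:ℝ)^2)⌋₊ : ℝ) * ((⌊Real.sqrt (y - (j1:ℝ)^2)⌋₊:ℝ)+1)/2))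
      - (∑ j ∈ Icc 1 N, if (j:ℝ) ≤ s then (j:ℝ)*((y - (j:ℝ)^2)/2) else 0)|
      ≤ B * (s/2) := by
    rw [← Finset.sum_sub_distrib]
    refine le_trans (Finset.abs_sum_le_sum_abs _ _) ?_
    refine le_trans (Finset.sum_le_sum key) ?_
    rw [← Finset.sum_mul, hB]
  have hM2 : |(y*B - B^2)/2 - y^2/8| ≤ y/8 := by
    have hab := abs_le.mp hBb
    have h2 : (B - y/2)^2 ≤ (s/2)^2 := sq_le_sq' (by linarith) hab.2
    rw [abs_le]
    constructor <;> nlinarith [sq_nonneg (B - y/2), hss]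
  have hBle : B ≤ y/2 + s/2 := by linarith [(abs_le.mp hBb).2]
  have hBnn : 0 ≤ B := by positivity
  calc |(∑ j1 ∈ Icc 1 N, (j1:ℝ) * ((⌊Real.sqrt (y - (j1:ℝ)^2)⌋₊ : ℝ) * ((⌊Real.sqrt (y - (j1:ℝ)^2)⌋₊:ℝ)+1)/2)) - y^2/8|
      ≤ |(∑ j1 ∈ Icc 1 N, (j1:ℝ) * ((⌊Real.sqrt (y - (j1:ℝ)^2)⌋₊ : ℝ) * ((⌊Real.sqrt (y - (j1:ℝ)^2)⌋₊:ℝ)+1)/2))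
          - (∑ j ∈ Icc 1 N, if (j:ℝ) ≤ s then (j:ℝ)*((y - (j:ℝ)^2)/2) else 0)|
        + |(∑ j ∈ Icc 1 N, if (j:ℝ) ≤ s then (j:ℝ)*((y - (j:ℝ)^2)/2) else 0) - y^2/8| := abs_sub_le _ _ _
    _ ≤ B*(s/2) + y/8 := add_le_add habs1 (by rw [hM]; exact hM2)
    _ ≤ y * s := by nlinarith [hs0, hs1, hss, mul_nonneg hs0 hs0]

lemma telescope_tail (N : ℕ) (hN : 1 ≤ N) :
    HasSum (fun n : ℕ => 1/((n:ℝ)+N) - 1/((n:ℝ)+N+1)) (1/N) := by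
  have hN1 : (1:ℝ) ≤ (N:ℝ) := by exact_mod_cast hN
  have hnn : ∀ n : ℕ, 0 ≤ 1/((n:ℝ)+N) - 1/((n:ℝ)+N+1) := by
    intro n
    have h1 : (0:ℝ) < (n:ℝ)+N := by positivity
    have h2 : (0:ℝ) < (n:ℝ)+N+1 := by positivity
    have := one_div_le_one_div_of_le h1 (by linarith : (n:ℝ)+N ≤ (n:ℝ)+N+1)
    linarith
  rw [hasSum_iff_tendsto_nat_of_nonneg hnn]
  have hpart : ∀ m : ℕ, ∑ i ∈ range m, (1/((i:ℝ)+N) - 1/((i:ℝ)+N+1)) = 1/N - 1/((m:ℝ)+N) := by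
    intro m
    have h := Finset.sum_range_sub' (fun i : ℕ => 1/((i:ℝ)+N)) m
    simp only [Nat.cast_zero, zero_add] at h
    rw [← h]
    apply Finset.sum_congr rfl
    intro i _
    push_cast
    ring_nf
  simp only [hpart]
  have h2 : Filter.Tendsto (fun m : ℕ => 1/((m:ℝ)+N)) Filter.atTop (nhds 0) := by
    have h3 : Filter.Tendsto (fun m : ℕ => (m:ℝ)+N) Filter.atTop Filter.atTop :=
      Filter.tendsto_atTop_add_const_right _ _ tendsto_natCast_atTop_atTop
    have h4 := tendsto_inv_atTop_zero.comp h3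
    simpa [one_div, Function.comp_def] using h4
  have := Filter.Tendsto.sub (tendsto_const_nhds (x := (1/N:ℝ))) h2
  simpa using this

lemma tsum_tail_bound (a : ℕ → ℝ) (ha : ∀ n : ℕ, |a n| ≤ 1/(n:ℝ)^2) (hs : Summable a)
    (N : ℕ) (hN : 1 ≤ N) :
    |(∑' n, a n) - ∑ n ∈ range (N+1), a n| ≤ 1/N := by
  have hsum2 : Summable (fun n => a (n + (N+1))) := (summable_nat_add_iff (N+1)).mpr hs
  have htel := telescope_tail N hN
  have hterm : ∀ n : ℕ, |a (n + (N+1))| ≤ 1/((n:ℝ)+N) - 1/((n:ℝ)+N+1) := by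
    intro n
    have h1 : (0:ℝ) < (n:ℝ)+N := by
      have : (1:ℝ) ≤ (N:ℝ) := by exact_mod_cast hN
      positivity
    have h2 : (0:ℝ) < (n:ℝ)+N+1 := by positivity
    have hd : 1/((n:ℝ)+N) - 1/((n:ℝ)+N+1) = 1/(((n:ℝ)+N)*((n:ℝ)+N+1)) := by
      field_simp
      ring
    rw [hd]
    refine le_trans (ha _) ?_
    have hc : ((n + (N+1) : ℕ) : ℝ) = (n:ℝ)+N+1 := by push_cast; ring
    rw [hc]
    apply one_div_le_one_div_of_le (by positivity)
    nlinarith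
  have key : |∑' n, a (n + (N+1))| ≤ 1/N := by
    calc |∑' n, a (n + (N+1))| ≤ ∑' n, |a (n + (N+1))| := by
          rw [← Real.norm_eq_abs]
          exact (norm_tsum_le_tsum_norm (by simpa [Real.norm_eq_abs] using hsum2.abs)).trans_eq
            (by simp [Real.norm_eq_abs])
      _ ≤ ∑' n : ℕ, (1/((n:ℝ)+N) - 1/((n:ℝ)+N+1)) :=
          Summable.tsum_le_tsum hterm hsum2.abs htel.summable
      _ = 1/N := htel.tsum_eq
  have hdecomp := Summable.sum_add_tsum_nat_add (N+1) hs
  have : (∑' n, a n) - ∑ n ∈ range (N+1), a n = ∑' n, a (n + (N+1)) := by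
    rw [← hdecomp]; ring
  rw [this]
  exact key

noncomputable def Mconst : ℝ := ∑' n : ℕ, (moebius n : ℝ)/(n:ℝ)^2
noncomputable def Zconst : ℝ := ∑' n : ℕ, 1/(n:ℝ)^3

lemma mu_abs (n : ℕ) : |(moebius n : ℝ)/(n:ℝ)^2| ≤ 1/(n:ℝ)^2 := by
  rcases Nat.eq_zero_or_pos n with h | h
  · simp [h]
  · rw [abs_div, abs_of_nonneg (by positivity : (0:ℝ) ≤ (n:ℝ)^2)]
    have h1 : |((moebius n : ℤ):ℝ)| ≤ 1 := by
      rw [← Int.cast_abs]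
      exact_mod_cast abs_moebius_le_one
    gcongr

lemma summable_mu : Summable (fun n : ℕ => (moebius n : ℝ)/(n:ℝ)^2) := by
  apply Summable.of_norm_bounded
    (Real.summable_one_div_nat_pow.mpr one_lt_two)
  intro n
  rw [Real.norm_eq_abs]
  exact mu_abs n

lemma z3_abs (n : ℕ) : |1/(n:ℝ)^3| ≤ 1/(n:ℝ)^2 := by
  rcases Nat.eq_zero_or_pos n with h | h
  · simp [h]
  · have h1 : (1:ℝ) ≤ (n:ℝ) := by exact_mod_cast h
    rw [abs_of_nonneg (by positivity)]
    apply one_div_le_one_div_of_le (by positivity)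
    nlinarith

lemma summable_z3 : Summable (fun n : ℕ => 1/(n:ℝ)^3) :=
  Real.summable_one_div_nat_pow.mpr (by norm_num)

lemma zeta3 : riemannZeta 3 = (Zconst : ℂ) := by
  rw [← ArithmeticFunction.LSeries_zeta_eq_riemannZeta (by norm_num : (1:ℝ) < (3:ℂ).re)]
  rw [LSeries, Zconst, Complex.ofReal_tsum]
  apply tsum_congr
  intro n
  rw [LSeries.term_def]
  rcases Nat.eq_zero_or_pos n with h | h
  · simp [h]
  · rw [if_neg (Nat.pos_iff_ne_zero.mp h), ArithmeticFunction.zeta_apply_ne (Nat.pos_iff_ne_zero.mp h)]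
    rw [show (3:ℂ) = ((3:ℕ):ℂ) by norm_num, Complex.cpow_natCast]
    push_cast
    ring

lemma zeta2inv : (riemannZeta 2)⁻¹ = (Mconst : ℂ) := by
  have h := ArithmeticFunction.LSeries_zeta_mul_Lseries_moebius (by norm_num : (1:ℝ) < (2:ℂ).re)
  rw [ArithmeticFunction.LSeries_zeta_eq_riemannZeta (by norm_num : (1:ℝ) < (2:ℂ).re)] at h
  have h2 : (riemannZeta 2)⁻¹ = LSeries (fun n => ((moebius n : ℤ) : ℂ)) 2 :=
    inv_eq_of_mul_eq_one_right h
  rw [h2, LSeries, Mconst, Complex.ofReal_tsum]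
  apply tsum_congr
  intro n
  rw [LSeries.term_def]
  rcases Nat.eq_zero_or_pos n with h | h
  · simp [h]
  · rw [if_neg (Nat.pos_iff_ne_zero.mp h)]
    rw [show (2:ℂ) = ((2:ℕ):ℂ) by norm_num, Complex.cpow_natCast]
    push_cast
    ring

lemma Mbound : |Mconst| ≤ 2 := by
  have h := tsum_tail_bound _ mu_abs summable_mu 1 le_rfl
  have h2 : (∑ n ∈ range 2, (moebius n : ℝ)/(n:ℝ)^2) = 1 := by
    simp [Finset.sum_range_succ]
  rw [h2] at h
  have h3 := abs_le.mp h
  simp only [Nat.cast_one] at h3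
  rw [abs_le]
  unfold Mconst
  exact ⟨by linarith [h3.1], by linarith [h3.2]⟩

lemma Zbound : |Zconst| ≤ 2 := by
  have h := tsum_tail_bound _ z3_abs summable_z3 1 le_rfl
  have h2 : (∑ n ∈ range 2, 1/(n:ℝ)^3) = 1 := by
    simp [Finset.sum_range_succ]
  rw [h2] at h
  have h3 := abs_le.mp h
  simp only [Nat.cast_one] at h3
  rw [abs_le]
  unfold Zconst
  exact ⟨by linarith [h3.1], by linarith [h3.2]⟩

lemma moebius_divisor_sum (m : ℕ) :
    (∑ e ∈ m.divisors, ((moebius e : ℤ):ℝ)) = if m = 1 then 1 else 0 := by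
  have h := congrArg (fun f : ArithmeticFunction ℤ => f m) moebius_mul_coe_zeta
  simp only [ArithmeticFunction.coe_mul_zeta_apply, ArithmeticFunction.one_apply] at h
  rw [show (∑ e ∈ m.divisors, ((moebius e : ℤ):ℝ)) = ((∑ e ∈ m.divisors, (moebius e : ℤ) : ℤ):ℝ) by push_cast; rfl, h]
  split_ifs <;> norm_num

lemma filter_divisors (N m : ℕ) (hm : 1 ≤ m) (hmN : m ≤ N) :
    (Icc 1 N).filter (· ∣ m) = m.divisors := by
  ext e
  simp only [mem_filter, mem_Icc, Nat.mem_divisors]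
  constructor
  · rintro ⟨⟨_, _⟩, h2⟩
    exact ⟨h2, by omega⟩
  · rintro ⟨h2, _⟩
    have he1 : 0 < e := Nat.pos_of_dvd_of_pos h2 (by omega)
    exact ⟨⟨he1, le_trans (Nat.le_of_dvd (by omega) h2) hmN⟩, h2⟩

lemma perpair (N n1 n2 : ℕ) (h1 : 1 ≤ n1) (h2 : 1 ≤ n2) (h1N : n1 ≤ N) :
    (∑ q ∈ Icc 1 N ×ˢ Icc 1 N,
       if q.1*q.2 ∣ n1 ∧ q.1*q.2 ∣ n2 then ((moebius q.1 : ℤ):ℝ) * n1 * n2 / q.2 else 0)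
    = (Nat.lcm n1 n2 : ℝ) := by
  set g := Nat.gcd n1 n2 with hg
  have hg0 : 0 < g := Nat.gcd_pos_of_pos_left _ h1
  have hgN : g ≤ N := le_trans (Nat.le_of_dvd h1 (Nat.gcd_dvd_left n1 n2)) h1N
  have step1 : ∀ q ∈ Icc 1 N ×ˢ Icc 1 N,
      (if q.1*q.2 ∣ n1 ∧ q.1*q.2 ∣ n2 then ((moebius q.1:ℤ):ℝ) * n1 * n2 / q.2 else 0)
      = (if q.1*q.2 ∣ g then ((moebius q.1:ℤ):ℝ) * n1 * n2 / q.2 else 0) := by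
    intro q _
    exact if_congr Nat.dvd_gcd_iff.symm rfl rfl
  rw [Finset.sum_congr rfl step1, Finset.sum_product, Finset.sum_comm]
  have inner : ∀ f ∈ Icc 1 N,
      (∑ e ∈ Icc 1 N, if e*f ∣ g then ((moebius e:ℤ):ℝ) * n1 * n2 / f else 0)
      = if f = g then (n1:ℝ)*n2/g else 0 := by
    intro f hf
    simp only [mem_Icc] at hf
    by_cases hfg : f ∣ g
    · have hm1 : 1 ≤ g / f := (Nat.one_le_div_iff (by omega)).mpr (Nat.le_of_dvd hg0 hfg)
      have hmN : g / f ≤ N := le_trans (Nat.div_le_self g f) hgN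
      have hdd : ∀ e : ℕ, (e*f ∣ g) ↔ e ∣ g / f := by
        intro e
        rw [Nat.dvd_div_iff_mul_dvd hfg, mul_comm]
      calc (∑ e ∈ Icc 1 N, if e*f ∣ g then ((moebius e:ℤ):ℝ) * n1 * n2 / f else 0)
          = ∑ e ∈ Icc 1 N, if e ∣ g/f then ((moebius e:ℤ):ℝ) * ((n1:ℝ) * n2 / f) else 0 := by
            apply Finset.sum_congr rfl
            intro e _
            refine if_congr (hdd e) ?_ rfl
            ring
        _ = ∑ e ∈ (Icc 1 N).filter (· ∣ g/f), ((moebius e:ℤ):ℝ) * ((n1:ℝ) * n2 / f) :=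
            (Finset.sum_filter _ _).symm
        _ = ∑ e ∈ (g/f).divisors, ((moebius e:ℤ):ℝ) * ((n1:ℝ) * n2 / f) := by
            rw [filter_divisors N (g/f) hm1 hmN]
        _ = (∑ e ∈ (g/f).divisors, ((moebius e:ℤ):ℝ)) * ((n1:ℝ) * n2 / f) := by
            rw [Finset.sum_mul]
        _ = (if g/f = 1 then 1 else 0) * ((n1:ℝ)*n2/f) := by rw [moebius_divisor_sum]
        _ = if f = g then (n1:ℝ)*n2/g else 0 := by
            by_cases hfg2 : g / f = 1
            · have hfe : f = g := by
                have h3 := Nat.div_mul_cancel hfg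
                rw [hfg2, one_mul] at h3
                exact h3
              rw [if_pos hfg2, if_pos hfe, hfe, one_mul]
            · have hne : f ≠ g := fun h => hfg2 (by rw [h]; exact Nat.div_self hg0)
              rw [if_neg hfg2, if_neg hne, zero_mul]
    · have hz : ∀ e ∈ Icc 1 N, (if e*f ∣ g then ((moebius e:ℤ):ℝ) * n1 * n2 / f else 0) = 0 := by
        intro e _
        rw [if_neg]
        intro hef
        exact hfg (dvd_trans (dvd_mul_left f e) hef)
      rw [Finset.sum_eq_zero hz, if_neg]
      intro h
      exact hfg (h ▸ dvd_refl g)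
  rw [Finset.sum_congr rfl inner, Finset.sum_ite_eq' (Icc 1 N) g (fun _ => (n1:ℝ)*n2/g),
    if_pos (mem_Icc.mpr ⟨hg0, hgN⟩)]
  have hl : (g:ℝ) * (Nat.lcm n1 n2 : ℝ) = (n1:ℝ)*(n2:ℝ) := by
    exact_mod_cast congrArg (fun k : ℕ => (k:ℝ)) (Nat.gcd_mul_lcm n1 n2)
  rw [eq_comm, eq_div_iff (by positivity : (g:ℝ) ≠ 0)]
  linarith

lemma dilate (N d : ℕ) (hd : 1 ≤ d) (x : ℝ)
    (hbig : ∀ n : ℕ, (n:ℝ)^2 ≤ x → n ≤ N) (F : ℕ → ℕ → ℝ) :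
    (∑ p ∈ Icc 1 N ×ˢ Icc 1 N,
       if (d ∣ p.1 ∧ d ∣ p.2 ∧ ((p.1:ℝ)^2 + (p.2:ℝ)^2 ≤ x)) then F p.1 p.2 else 0)
    = ∑ p ∈ Icc 1 N ×ˢ Icc 1 N,
       if ((d:ℝ)^2 * ((p.1:ℝ)^2 + (p.2:ℝ)^2) ≤ x) then F (d*p.1) (d*p.2) else 0 := by
  rw [← Finset.sum_filter, ← Finset.sum_filter]
  refine Finset.sum_nbij' (fun p => (p.1 / d, p.2 / d)) (fun p => (d * p.1, d * p.2))
    ?_ ?_ ?_ ?_ ?_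
  · rintro ⟨p1, p2⟩ hp
    simp only [mem_filter, mem_product, mem_Icc] at hp ⊢
    obtain ⟨⟨⟨hp11, hp12⟩, hp21, hp22⟩, hd1, hd2, hcond⟩ := hp
    have e1 : (d:ℝ) * ((p1/d : ℕ):ℝ) = p1 := by exact_mod_cast Nat.mul_div_cancel' hd1
    have e2 : (d:ℝ) * ((p2/d : ℕ):ℝ) = p2 := by exact_mod_cast Nat.mul_div_cancel' hd2
    refine ⟨⟨⟨?_, Nat.le_trans (Nat.div_le_self _ _) hp12⟩, ?_, Nat.le_trans (Nat.div_le_self _ _) hp22⟩, ?_⟩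
    · exact Nat.one_le_div_iff (by omega) |>.mpr (Nat.le_of_dvd (by omega) hd1)
    · exact Nat.one_le_div_iff (by omega) |>.mpr (Nat.le_of_dvd (by omega) hd2)
    · show (d:ℝ)^2 * (((p1/d : ℕ):ℝ)^2 + ((p2/d : ℕ):ℝ)^2) ≤ x
      nlinarith [e1, e2]
  · rintro ⟨q1, q2⟩ hq
    simp only [mem_filter, mem_product, mem_Icc] at hq ⊢
    obtain ⟨⟨⟨hq11, hq12⟩, hq21, hq22⟩, hcond⟩ := hq
    have hq1r : (0:ℝ) ≤ (q1:ℝ) := Nat.cast_nonneg _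
    have hq2r : (0:ℝ) ≤ (q2:ℝ) := Nat.cast_nonneg _
    have c1 : ((d*q1 : ℕ):ℝ)^2 ≤ x := by push_cast; nlinarith
    have c2 : ((d*q2 : ℕ):ℝ)^2 ≤ x := by push_cast; nlinarith
    refine ⟨⟨⟨Nat.mul_pos (by omega) (by omega), hbig _ c1⟩, Nat.mul_pos (by omega) (by omega), hbig _ c2⟩, ⟨Dvd.intro _ rfl, Dvd.intro _ rfl, ?_⟩⟩
    show ((d*q1 : ℕ):ℝ)^2 + ((d*q2 : ℕ):ℝ)^2 ≤ x
    push_cast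
    nlinarith
  · rintro ⟨p1, p2⟩ hp
    simp only [mem_filter, mem_product, mem_Icc] at hp
    obtain ⟨_, hd1, hd2, _⟩ := hp
    simp [Nat.mul_div_cancel' hd1, Nat.mul_div_cancel' hd2]
  · rintro ⟨q1, q2⟩ _
    have hd0 : 0 < d := hd
    simp [Nat.mul_div_cancel_left _ hd0]
  · rintro ⟨p1, p2⟩ hp
    simp only [mem_filter, mem_product, mem_Icc] at hp
    obtain ⟨_, hd1, hd2, _⟩ := hp
    simp [Nat.mul_div_cancel' hd1, Nat.mul_div_cancel' hd2]

lemma range_succ_eq_insert (N : ℕ) : range (N+1) = insert 0 (Icc 1 N) := by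
  ext i
  simp only [mem_range, mem_insert, mem_Icc]
  omega

lemma sum_inv_sq_aux : ∀ N : ℕ, 1 ≤ N → (∑ f ∈ Icc 1 N, 1/(f:ℝ)^2) ≤ 2 - 1/(N:ℝ) := by
  intro N
  induction N with
  | zero => omega
  | succ n ih =>
    intro _
    rcases Nat.eq_zero_or_pos n with h | h
    · subst h
      norm_num
    · have hn1 : (1:ℝ) ≤ (n:ℝ) := by exact_mod_cast h
      rw [Finset.sum_Icc_succ_top (by omega : 1 ≤ n+1)]
      have := ih h
      have key : 1/((n:ℝ)+1)^2 ≤ 1/(n:ℝ) - 1/((n:ℝ)+1) := by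
        rw [div_sub_div _ _ (by positivity) (by positivity)]
        rw [div_le_div_iff₀ (by positivity) (by positivity)]
        ring_nf
        nlinarith
      push_cast
      push_cast at this
      linarith

lemma sum_inv_sq_le (N : ℕ) : (∑ f ∈ Icc 1 N, 1/(f:ℝ)^2) ≤ 2 := by
  rcases Nat.eq_zero_or_pos N with h | h
  · subst h; simp
  · have := sum_inv_sq_aux N h
    have h2 : (0:ℝ) < (N:ℝ) := by exact_mod_cast h
    have : (0:ℝ) ≤ 1/(N:ℝ) := by positivity
    linarith [sum_inv_sq_aux N h]

lemma harmonic_bound (N : ℕ) (hN : 1 ≤ N) :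
    (∑ e ∈ Icc 1 N, 1/(e:ℝ)) ≤ 1 + Real.log N := by
  have h := harmonic_le_one_add_log N
  have h2 : ((harmonic N : ℚ) : ℝ) = ∑ e ∈ Icc 1 N, 1/(e:ℝ) := by
    rw [harmonic_eq_sum_Icc]
    push_cast
    apply Finset.sum_congr rfl
    intro i _
    rw [one_div]
  linarith [h2 ▸ h]
set_option maxHeartbeats 3000000 in
theorem stmt_18 :
    ∃ C : ℝ, ∀ x : ℝ, 2 ≤ x →
      ‖(∑' v : {v : ℕ × ℕ // (0 < v.1 ∧ 0 < v.2) ∧ (v.1 : ℝ) ^ 2 + (v.2 : ℝ) ^ 2 ≤ x},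
            ((Nat.lcm v.val.1 v.val.2 : ℕ) : ℂ))
          - riemannZeta 3 / riemannZeta 2 / 8 * ((x : ℂ)) ^ 2‖
        ≤ C * x ^ ((3 : ℝ) / 2) * Real.log x := by
  use 10
  intro x hx
  have hx0 : (0:ℝ) < x := by linarith
  set N := ⌊x⌋₊ with hNdef
  have hN2 : 2 ≤ N := Nat.le_floor (by exact_mod_cast hx)
  have hN1 : 1 ≤ N := by omega
  have hNr2 : (2:ℝ) ≤ (N:ℝ) := by exact_mod_cast hN2
  have hNx : (N:ℝ) ≤ x := Nat.floor_le hx0.le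
  have hxN : x - 1 < (N:ℝ) := Nat.sub_one_lt_floor x
  have hsqN : Real.sqrt x ≤ (N:ℝ) := by
    have h1 : x ≤ (N:ℝ)^2 := by nlinarith
    calc Real.sqrt x ≤ Real.sqrt ((N:ℝ)^2) := Real.sqrt_le_sqrt h1
      _ = (N:ℝ) := Real.sqrt_sq (by positivity)
  have hbig : ∀ n : ℕ, (n:ℝ)^2 ≤ x → n ≤ N := by
    intro n h
    have h2 : (n:ℝ) ≤ Real.sqrt x := by
      rw [show (n:ℝ) = Real.sqrt ((n:ℝ)^2) from (Real.sqrt_sq (Nat.cast_nonneg n)).symm]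
      exact Real.sqrt_le_sqrt h
    exact_mod_cast le_trans h2 hsqN
  set s := Real.sqrt x with hsx
  have hs0 : 0 ≤ s := Real.sqrt_nonneg x
  have hs2 : s^2 = x := Real.sq_sqrt hx0.le
  have hs1 : (1:ℝ) ≤ s := by
    rw [hsx]
    rw [Real.le_sqrt' one_pos]
    nlinarith
  set S1 : ℝ := ∑ p ∈ Icc 1 N ×ˢ Icc 1 N,
      if ((p.1:ℝ)^2 + (p.2:ℝ)^2 ≤ x) then (Nat.lcm p.1 p.2 : ℝ) else 0 with hS1
  -- Step 1 : the tsum equals S1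
  have step_tsum : (∑' v : {v : ℕ × ℕ // (0 < v.1 ∧ 0 < v.2) ∧ (v.1 : ℝ) ^ 2 + (v.2 : ℝ) ^ 2 ≤ x},
      ((Nat.lcm v.val.1 v.val.2 : ℕ) : ℂ)) = ((S1 : ℝ) : ℂ) := by
    have hPT : ∀ v : ℕ×ℕ, ((0 < v.1 ∧ 0 < v.2) ∧ (v.1:ℝ)^2+(v.2:ℝ)^2 ≤ x) ↔
        v ∈ (Icc 1 N ×ˢ Icc 1 N).filter (fun p => (p.1:ℝ)^2+(p.2:ℝ)^2 ≤ x) := by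
      rintro ⟨a,b⟩
      simp only [mem_filter, mem_product, mem_Icc]
      constructor
      · rintro ⟨⟨ha, hb⟩, hc⟩
        have hra : ((a:ℝ))^2 ≤ x := by nlinarith [sq_nonneg (b:ℝ)]
        have hrb : ((b:ℝ))^2 ≤ x := by nlinarith [sq_nonneg (a:ℝ)]
        exact ⟨⟨⟨ha, hbig a hra⟩, hb, hbig b hrb⟩, hc⟩
      · rintro ⟨⟨⟨ha, _⟩, hb, _⟩, hc⟩
        exact ⟨⟨ha, hb⟩, hc⟩
    calc (∑' v : {v : ℕ × ℕ // (0 < v.1 ∧ 0 < v.2) ∧ (v.1 : ℝ) ^ 2 + (v.2 : ℝ) ^ 2 ≤ x},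
        ((Nat.lcm v.val.1 v.val.2 : ℕ) : ℂ))
        = (∑' p : {p : ℕ×ℕ // p ∈ (Icc 1 N ×ˢ Icc 1 N).filter (fun p => (p.1:ℝ)^2+(p.2:ℝ)^2 ≤ x)},
            ((Nat.lcm p.val.1 p.val.2 : ℕ):ℂ)) := by
          exact Equiv.tsum_eq (e := Equiv.subtypeEquivRight hPT)
            (f := fun p => ((Nat.lcm p.val.1 p.val.2 : ℕ):ℂ))
      _ = ∑ p ∈ (Icc 1 N ×ˢ Icc 1 N).filter (fun p => (p.1:ℝ)^2+(p.2:ℝ)^2 ≤ x),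
            ((Nat.lcm p.1 p.2 : ℕ):ℂ) := by
          exact Finset.tsum_subtype ((Icc 1 N ×ˢ Icc 1 N).filter (fun p => (p.1:ℝ)^2+(p.2:ℝ)^2 ≤ x))
            (fun p => ((Nat.lcm p.1 p.2 : ℕ):ℂ))
      _ = ((S1 : ℝ):ℂ) := by
          rw [hS1, ← Finset.sum_filter]
          norm_cast
  -- Step 2 : S1 as a sum over (e,f) of weights times lattice sums
  have step2 : S1 = ∑ q ∈ Icc 1 N ×ˢ Icc 1 N,
      ((((ArithmeticFunction.moebius q.1 : ℤ):ℝ) * (q.1:ℝ)^2 * (q.2:ℝ)) *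
        (∑ p ∈ Icc 1 N ×ˢ Icc 1 N,
          if ((p.1:ℝ)^2 + (p.2:ℝ)^2 ≤ x/((q.1:ℝ)*(q.2:ℝ))^2) then (p.1:ℝ)*(p.2:ℝ) else 0)) := by
    rw [hS1]
    have e1 : ∀ p ∈ Icc 1 N ×ˢ Icc 1 N,
        (if ((p.1:ℝ)^2 + (p.2:ℝ)^2 ≤ x) then (Nat.lcm p.1 p.2 : ℝ) else 0)
        = ∑ q ∈ Icc 1 N ×ˢ Icc 1 N,
            (if (q.1*q.2 ∣ p.1 ∧ q.1*q.2 ∣ p.2 ∧ ((p.1:ℝ)^2 + (p.2:ℝ)^2 ≤ x))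
              then ((ArithmeticFunction.moebius q.1:ℤ):ℝ) * p.1 * p.2 / q.2 else 0) := by
      intro p hp
      simp only [mem_product, mem_Icc] at hp
      by_cases hc : ((p.1:ℝ)^2 + (p.2:ℝ)^2 ≤ x)
      · rw [if_pos hc, ← perpair N p.1 p.2 hp.1.1 hp.2.1 hp.1.2]
        apply Finset.sum_congr rfl
        intro q _
        exact if_congr (by tauto) rfl rfl
      · rw [if_neg hc, eq_comm]
        apply Finset.sum_eq_zero
        intro q _
        rw [if_neg (by tauto)]
    rw [Finset.sum_congr rfl e1, Finset.sum_comm]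
    apply Finset.sum_congr rfl
    intro q hq
    simp only [mem_product, mem_Icc] at hq
    have hd1 : 1 ≤ q.1*q.2 := Nat.mul_pos hq.1.1 hq.2.1
    have hq1r : (1:ℝ) ≤ (q.1:ℝ) := by exact_mod_cast hq.1.1
    have hq2r : (1:ℝ) ≤ (q.2:ℝ) := by exact_mod_cast hq.2.1
    rw [dilate N (q.1*q.2) hd1 x hbig
      (fun a b => ((ArithmeticFunction.moebius q.1:ℤ):ℝ) * (a:ℝ) * (b:ℝ) / (q.2:ℝ))]
    rw [Finset.mul_sum]
    apply Finset.sum_congr rfl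
    intro p _
    have hcond : ((((q.1*q.2:ℕ)):ℝ)^2 * ((p.1:ℝ)^2+(p.2:ℝ)^2) ≤ x) ↔
        ((p.1:ℝ)^2+(p.2:ℝ)^2 ≤ x/((q.1:ℝ)*(q.2:ℝ))^2) := by
      rw [le_div_iff₀ (by positivity)]
      push_cast
      constructor <;> intro h <;> nlinarith
    rw [mul_ite, mul_zero]
    refine if_congr hcond ?_ rfl
    have hq2ne : (q.2:ℝ) ≠ 0 := by positivity
    push_cast
    field_simp
  -- partial sums of the constants
  set MN : ℝ := ∑ e ∈ Icc 1 N, ((ArithmeticFunction.moebius e:ℤ):ℝ)/(e:ℝ)^2 with hMN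
  set ZN : ℝ := ∑ f ∈ Icc 1 N, 1/(f:ℝ)^3 with hZN
  -- Step 3 : main error estimate
  have step3 : |S1 - x^2/8 * (MN * ZN)| ≤ x*s*((1+Real.log x)*2) := by
    have qbound : ∀ q ∈ Icc 1 N ×ˢ Icc 1 N,
        |((((ArithmeticFunction.moebius q.1 : ℤ):ℝ) * (q.1:ℝ)^2 * (q.2:ℝ)) *
            (∑ p ∈ Icc 1 N ×ˢ Icc 1 N,
              if ((p.1:ℝ)^2 + (p.2:ℝ)^2 ≤ x/((q.1:ℝ)*(q.2:ℝ))^2) then (p.1:ℝ)*(p.2:ℝ) else 0))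
          - x^2/8 * (((ArithmeticFunction.moebius q.1:ℤ):ℝ)/(q.1:ℝ)^2 * (1/(q.2:ℝ)^3))|
        ≤ x*s * (1/(q.1:ℝ) * (1/(q.2:ℝ)^2)) := by
      intro q hq
      simp only [mem_product, mem_Icc] at hq
      have hq1r : (1:ℝ) ≤ (q.1:ℝ) := by exact_mod_cast hq.1.1
      have hq2r : (1:ℝ) ≤ (q.2:ℝ) := by exact_mod_cast hq.2.1
      set d : ℝ := (q.1:ℝ)*(q.2:ℝ) with hd
      have hd1 : (1:ℝ) ≤ d := by nlinarith
      have hd0 : (0:ℝ) < d := by linarith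
      set y : ℝ := x/d^2 with hy
      have hy0 : 0 ≤ y := by positivity
      have hyx : y ≤ x := by
        rw [hy]
        apply div_le_self hx0.le
        nlinarith
      have hsqy : Real.sqrt y ≤ (N:ℝ) := le_trans (Real.sqrt_le_sqrt hyx) hsqN
      have hGest := Gest N y hy0 hsqy
      have hsy : Real.sqrt y = s/d := by
        rw [hy, Real.sqrt_div hx0.le, Real.sqrt_sq hd0.le, hsx]
      have hyy : y * Real.sqrt y = x*s/d^3 := by
        rw [hsy, hy]
        ring
      have hmu : |((ArithmeticFunction.moebius q.1:ℤ):ℝ)| ≤ 1 := by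
        rw [← Int.cast_abs]
        exact_mod_cast ArithmeticFunction.abs_moebius_le_one
      set G : ℝ := ∑ p ∈ Icc 1 N ×ˢ Icc 1 N,
          if ((p.1:ℝ)^2 + (p.2:ℝ)^2 ≤ y) then (p.1:ℝ)*(p.2:ℝ) else 0 with hG
      set c : ℝ := ((ArithmeticFunction.moebius q.1 : ℤ):ℝ) * (q.1:ℝ)^2 * (q.2:ℝ) with hcc
      have hcabs : |c| ≤ (q.1:ℝ)^2 * (q.2:ℝ) := by
        rw [hcc, abs_mul, abs_mul]
        have h1 : |(q.1:ℝ)^2| = (q.1:ℝ)^2 := abs_of_nonneg (by positivity)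
        have h2 : |(q.2:ℝ)| = (q.2:ℝ) := abs_of_nonneg (by positivity)
        rw [h1, h2]
        have h3 : |((ArithmeticFunction.moebius q.1:ℤ):ℝ)| * ((q.1:ℝ)^2 * (q.2:ℝ)) ≤ 1 * ((q.1:ℝ)^2 * (q.2:ℝ)) :=
          mul_le_mul_of_nonneg_right hmu (by positivity)
        nlinarith [h3]
      have hmain : c * (y^2/8) = x^2/8 * (((ArithmeticFunction.moebius q.1:ℤ):ℝ)/(q.1:ℝ)^2 * (1/(q.2:ℝ)^3)) := by
        rw [hcc, hy, hd]
        have h1 : (q.1:ℝ) ≠ 0 := by positivity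
        have h2 : (q.2:ℝ) ≠ 0 := by positivity
        field_simp
      calc |c * G - x^2/8 * (((ArithmeticFunction.moebius q.1:ℤ):ℝ)/(q.1:ℝ)^2 * (1/(q.2:ℝ)^3))|
          = |c * (G - y^2/8)| := by rw [← hmain]; ring_nf
        _ = |c| * |G - y^2/8| := abs_mul _ _
        _ ≤ ((q.1:ℝ)^2 * (q.2:ℝ)) * (y * Real.sqrt y) :=
            mul_le_mul hcabs hGest (abs_nonneg _) (by positivity)
        _ = x*s * (1/(q.1:ℝ) * (1/(q.2:ℝ)^2)) := by
            rw [hyy, hd]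
            have h1 : (q.1:ℝ) ≠ 0 := by positivity
            have h2 : (q.2:ℝ) ≠ 0 := by positivity
            field_simp
    have main_eq : (∑ q ∈ Icc 1 N ×ˢ Icc 1 N,
        x^2/8 * (((ArithmeticFunction.moebius q.1:ℤ):ℝ)/(q.1:ℝ)^2 * (1/(q.2:ℝ)^3)))
        = x^2/8 * (MN * ZN) := by
      rw [← Finset.mul_sum]
      congr 1
      rw [hMN, hZN, Finset.sum_mul_sum, Finset.sum_product]
    rw [step2, ← main_eq, ← Finset.sum_sub_distrib]
    refine le_trans (Finset.abs_sum_le_sum_abs _ _) ?_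
    refine le_trans (Finset.sum_le_sum qbound) ?_
    have expand : (∑ q ∈ Icc 1 N ×ˢ Icc 1 N, x*s * (1/(q.1:ℝ) * (1/(q.2:ℝ)^2)))
        = x*s * ((∑ e ∈ Icc 1 N, 1/(e:ℝ)) * (∑ f ∈ Icc 1 N, 1/(f:ℝ)^2)) := by
      rw [← Finset.mul_sum]
      congr 1
      rw [Finset.sum_mul_sum, Finset.sum_product]
    rw [expand]
    have hh : (∑ e ∈ Icc 1 N, 1/(e:ℝ)) ≤ 1 + Real.log x := by
      refine le_trans (harmonic_bound N hN1) ?_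
      have : Real.log (N:ℝ) ≤ Real.log x := Real.log_le_log (by positivity) hNx
      linarith
    have hsq2 : (∑ f ∈ Icc 1 N, 1/(f:ℝ)^2) ≤ 2 := sum_inv_sq_le N
    have hhnn : (0:ℝ) ≤ ∑ e ∈ Icc 1 N, 1/(e:ℝ) := by positivity
    have hsqnn : (0:ℝ) ≤ ∑ f ∈ Icc 1 N, 1/(f:ℝ)^2 := by positivity
    have hlogpos : (0:ℝ) ≤ Real.log x := Real.log_nonneg (by linarith)
    have hxs : (0:ℝ) ≤ x*s := by positivity
    refine mul_le_mul_of_nonneg_left ?_ hxs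
    apply mul_le_mul (by linarith) hsq2 hsqnn (by linarith)
  -- Step 4 : tails of the constants
  have hrange : ∀ a : ℕ → ℝ, a 0 = 0 → (∑ n ∈ range (N+1), a n) = ∑ n ∈ Icc 1 N, a n := by
    intro a h0
    rw [range_succ_eq_insert, Finset.sum_insert (by simp), h0, zero_add]
  have hMtail : |Mconst - MN| ≤ 1/(N:ℝ) := by
    have h := tsum_tail_bound _ mu_abs summable_mu N hN1
    rw [hrange _ (by simp)] at h
    exact h
  have hZtail : |Zconst - ZN| ≤ 1/(N:ℝ) := by
    have h := tsum_tail_bound _ z3_abs summable_z3 N hN1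
    rw [hrange _ (by simp)] at h
    exact h
  have hNinv : 1/(N:ℝ) ≤ 1 := by
    rw [div_le_one (by positivity)]
    linarith
  have hMNb : |MN| ≤ 3 := by
    have h := abs_sub_le MN Mconst 0
    simp only [sub_zero] at h
    have h2 : |MN - Mconst| ≤ 1 := by rw [abs_sub_comm]; linarith [hMtail, hNinv]
    linarith [Mbound, h, h2]
  have step4 : |x^2/8 * (MN * ZN) - x^2/8 * (Mconst * Zconst)| ≤ 2*x := by
    have hd : MN * ZN - Mconst * Zconst = MN * (ZN - Zconst) + Zconst * (MN - Mconst) := by ring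
    have habs : |MN * ZN - Mconst * Zconst| ≤ 5/(N:ℝ) := by
      rw [hd]
      calc |MN * (ZN - Zconst) + Zconst * (MN - Mconst)|
          ≤ |MN * (ZN - Zconst)| + |Zconst * (MN - Mconst)| := abs_add_le _ _
        _ = |MN| * |ZN - Zconst| + |Zconst| * |MN - Mconst| := by rw [abs_mul, abs_mul]
        _ ≤ 3 * (1/(N:ℝ)) + 2 * (1/(N:ℝ)) := by
            apply add_le_add
            · exact mul_le_mul hMNb (by rw [abs_sub_comm]; exact hZtail) (abs_nonneg _) (by norm_num)
            · exact mul_le_mul Zbound (by rw [abs_sub_comm]; exact hMtail) (abs_nonneg _) (by norm_num)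
        _ = 5/(N:ℝ) := by ring
    calc |x^2/8 * (MN * ZN) - x^2/8 * (Mconst * Zconst)|
        = x^2/8 * |MN * ZN - Mconst * Zconst| := by
          rw [← mul_sub, abs_mul, abs_of_nonneg (by positivity : (0:ℝ) ≤ x^2/8)]
      _ ≤ x^2/8 * (5/(N:ℝ)) := mul_le_mul_of_nonneg_left habs (by positivity)
      _ ≤ 2*x := by
          have key : x^2/8 * (5/(N:ℝ)) = 5*x^2/(8*(N:ℝ)) := by ring
          rw [key, div_le_iff₀ (by positivity)]
          nlinarith [mul_nonneg hx0.le (by linarith : (0:ℝ) ≤ (N:ℝ) - (x-1))]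
  -- Step 5 : conclude
  have hzeta : riemannZeta 3 / riemannZeta 2 / 8 * ((x : ℂ)) ^ 2
      = ((Zconst * Mconst / 8 * x^2 : ℝ) : ℂ) := by
    rw [div_eq_mul_inv (riemannZeta 3), zeta3, zeta2inv]
    push_cast
    ring
  rw [step_tsum, hzeta, ← Complex.ofReal_sub, Complex.norm_real, Real.norm_eq_abs]
  have hfinal : |S1 - Zconst * Mconst / 8 * x^2| ≤ x*s*((1+Real.log x)*2) + 2*x := by
    have h1 : S1 - Zconst * Mconst / 8 * x^2
        = (S1 - x^2/8 * (MN * ZN)) + (x^2/8 * (MN * ZN) - x^2/8 * (Mconst * Zconst)) := by ring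
    rw [h1]
    exact le_trans (abs_add_le _ _) (add_le_add step3 step4)
  have hx32 : x ^ ((3:ℝ)/2) = x * s := by
    rw [show (3:ℝ)/2 = 1 + 1/2 by norm_num, Real.rpow_add hx0, Real.rpow_one, hsx,
      Real.sqrt_eq_rpow]
  rw [hx32]
  have hlog2 : (1:ℝ)/2 ≤ Real.log x := by
    have h2 : Real.log 2 ≤ Real.log x := Real.log_le_log (by norm_num) hx
    have := Real.log_two_gt_d9
    linarith
  have hlognn : (0:ℝ) ≤ Real.log x := by linarith
  refine le_trans hfinal ?_
  have hb1 : x*s*((1+Real.log x)*2) ≤ 6 * (x*s) * Real.log x := by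
    have hxs : (0:ℝ) ≤ x*s := by positivity
    have : (1+Real.log x)*2 ≤ 6 * Real.log x := by linarith
    nlinarith
  have hb2 : 2*x ≤ 4 * (x*s) * Real.log x := by
    nlinarith
  calc x*s*((1+Real.log x)*2) + 2*x ≤ 6 * (x*s) * Real.log x + 4 * (x*s) * Real.log x :=
        add_le_add hb1 hb2
    _ = 10 * (x*s) * Real.log x := by ring
end
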